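/- arXiv:1602.04505 — 4 statements merged into one kernel-verified Lean document; each statement's English description precedes it below -/
import Mathlib

section
/- Let G be a finite simple graph, 𝒯 a G-tangle of order k, (Y,S,Z) ∈ 𝒯_min, and (Y',S',Z') ∈ 𝒯 with S' ⊆ S. Then Z ∪ (S ∖ S') ⊆ Z'. -/
variable {V : Type*} {W : Type*}

/-- A separation (Y,S,Z) of a graph: pairwise disjoint sets covering the vertex set,
with no edge between Y and Z. -/
def IsSeparation (G : SimpleGraph V) (Y S Z : Set V) : Prop :=
  Disjoint Y S ∧ Disjoint Y Z ∧ Disjoint S Z ∧ Y ∪ S ∪ Z = Set.univ ∧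
    ∀ y ∈ Y, ∀ z ∈ Z, ¬ G.Adj y z

/-- `G` is `k`-connected: more than `k` vertices and no proper separation of order `< k`. -/
def KConnected (k : ℕ) (G : SimpleGraph V) : Prop :=
  k < Nat.card V ∧
    ∀ Y S Z : Set V, IsSeparation G Y S Z → Y.Nonempty → Z.Nonempty → k ≤ S.ncard

/-- `G` is quasi-4-connected. -/
def Quasi4Connected (G : SimpleGraph V) : Prop :=
  KConnected 3 G ∧
    ∀ Y S Z : Set V, IsSeparation G Y S Z → S.ncard = 3 → Y.ncard ≤ 1 ∨ Z.ncard ≤ 1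

/-- `T` is a `G`-tangle of order `k`. -/
def IsTangle (G : SimpleGraph V) (k : ℕ) (T : Set (Set V × Set V × Set V)) : Prop :=
  (∀ p ∈ T, IsSeparation G p.1 p.2.1 p.2.2 ∧ p.2.1.ncard < k) ∧
  (∀ Y S Z : Set V, IsSeparation G Y S Z → S.ncard < k →
    (Y, S, Z) ∈ T ∨ (Z, S, Y) ∈ T) ∧
  (∀ p₁ ∈ T, ∀ p₂ ∈ T, ∀ p₃ ∈ T,
    (p₁.2.2 ∩ p₂.2.2 ∩ p₃.2.2 : Set V).Nonempty ∨
      ∃ u v : V, G.Adj u v ∧ (u ∈ p₁.2.2 ∨ v ∈ p₁.2.2) ∧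
        (u ∈ p₂.2.2 ∨ v ∈ p₂.2.2) ∧ (u ∈ p₃.2.2 ∨ v ∈ p₃.2.2)) ∧
  (∀ p ∈ T, (p.2.2 : Set V).Nonempty)

/-- The order `⪯` on separations: (Y,S,Z) ⪯ (Y',S',Z') iff S ∪ Z ⊊ S' ∪ Z', or
S ∪ Z = S' ∪ Z' and S ⊆ S'. -/
def SepLE (p q : Set V × Set V × Set V) : Prop :=
  p.2.1 ∪ p.2.2 ⊂ q.2.1 ∪ q.2.2 ∨
    (p.2.1 ∪ p.2.2 = q.2.1 ∪ q.2.2 ∧ p.2.1 ⊆ q.2.1)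

/-- `p` is a `⪯`-minimal element of `T`. -/
def IsMinimalIn (T : Set (Set V × Set V × Set V)) (p : Set V × Set V × Set V) : Prop :=
  p ∈ T ∧ ∀ q ∈ T, SepLE q p → q = p

/-- Two separations are orthogonal. (They cross if they are not orthogonal.) -/
def SepOrthogonal (p q : Set V × Set V × Set V) : Prop :=
  (p.1 ∪ p.2.1) ∩ (q.1 ∪ q.2.1) ⊆ p.2.1 ∩ q.2.1

/-- A separation (Y,S,Z) is degenerate: |Y| = 1 and S is an independent set. -/
def Degenerate (G : SimpleGraph V) (Y S Z : Set V) : Prop :=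
  Y.ncard = 1 ∧ ∀ u ∈ S, ∀ v ∈ S, ¬ G.Adj u v

/-- The neighbourhood N(X): vertices outside X adjacent to a vertex of X. -/
def Nbhd (G : SimpleGraph V) (X : Set V) : Set V :=
  {v | v ∉ X ∧ ∃ u ∈ X, G.Adj u v}

/-- `C` is (the vertex set of) a connected component of `G − X`. -/
def IsCompOutside (G : SimpleGraph V) (X C : Set V) : Prop :=
  C ⊆ Xᶜ ∧ (G.induce C).Connected ∧ ∀ u ∈ C, ∀ v : V, v ∉ X → G.Adj u v → v ∈ C

/-- The torso `G⟦X⟧` of `X` in `G`. -/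
def torso (G : SimpleGraph V) (X : Set V) : SimpleGraph X where
  Adj u v := u ≠ v ∧ (G.Adj (u : V) (v : V) ∨
    ∃ C : Set V, IsCompOutside G X C ∧ (u : V) ∈ Nbhd G C ∧ (v : V) ∈ Nbhd G C)
  symm := by
    constructor
    rintro u v ⟨hne, h | ⟨C, hC, hu, hv⟩⟩
    · exact ⟨hne.symm, Or.inl h.symm⟩
    · exact ⟨hne.symm, Or.inr ⟨C, hC, hv, hu⟩⟩
  loopless := by
    constructor
    intro u h
    exact h.1 rfl

/-- `H` is a minor of `G`. -/
def IsMinor (H : SimpleGraph W) (G : SimpleGraph V) : Prop :=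
  ∃ M : W → Set V,
    (∀ w : W, (G.induce (M w)).Connected) ∧
    (Pairwise fun w w' : W => Disjoint (M w) (M w')) ∧
    ∀ w w' : W, H.Adj w w' → ∃ u ∈ M w, ∃ v ∈ M w', G.Adj u v

/-- `M` is a faithful model of the graph `H` (with vertex set `X ⊆ V(G)`) in `G`. -/
def FaithfulModel (G : SimpleGraph V) (X : Set V) (H : SimpleGraph X)
    (M : X → Set V) : Prop :=
  (∀ w : X, (w : V) ∈ M w) ∧
  (∀ w : X, (G.induce (M w)).Connected) ∧
  (Pairwise fun w w' : X => Disjoint (M w) (M w')) ∧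
  ∀ w w' : X, H.Adj w w' → ∃ u ∈ M w, ∃ v ∈ M w', G.Adj u v

/-- `H` (a graph with vertex set `X ⊆ V(G)`) is a faithful minor of `G`. -/
def IsFaithfulMinor (G : SimpleGraph V) (X : Set V) (H : SimpleGraph X) : Prop :=
  ∃ M : X → Set V, FaithfulModel G X H M

/-- The projection of a separation of `G` to a minor with model `M`. -/
def projSep {X : Set V} (M : X → Set V) (p : Set V × Set V × Set V) :
    Set X × Set X × Set X :=
  ({w : X | M w ⊆ p.1}, {w : X | (M w ∩ p.2.1).Nonempty}, {w : X | M w ⊆ p.2.2})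

/-- The graph TH₊₃: vertices 0,1,2,3 are v₁,v₂,v₃,v₄ (pairwise adjacent); 4,5,6 are
w₁,w₂,w₃ with w₁ ~ v₁,v₂,v₃, w₂ ~ v₁,v₂,v₄, w₃ ~ v₁,v₃,v₄. -/
def TH3 : SimpleGraph (Fin 7) :=
  SimpleGraph.fromRel (fun u v =>
    (u.val < 4 ∧ v.val < 4) ∨
    (u.val = 4 ∧ (v.val = 0 ∨ v.val = 1 ∨ v.val = 2)) ∨
    (u.val = 5 ∧ (v.val = 0 ∨ v.val = 1 ∨ v.val = 3)) ∨
    (u.val = 6 ∧ (v.val = 0 ∨ v.val = 2 ∨ v.val = 3)))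

/-- The graph TR₊₃: vertices 0,1,2 are v₁,v₂,v₃ (pairwise adjacent); 3,4,5 are
w₁,w₂,w₃, each adjacent to each of v₁,v₂,v₃. -/
def TR3 : SimpleGraph (Fin 6) :=
  SimpleGraph.fromRel (fun u v =>
    (u.val < 3 ∧ v.val < 3) ∨ (3 ≤ u.val ∧ v.val < 3))

/-- A graph is exceptional if it embeds (injectively, preserving adjacency)
into TH₊₃ or into TR₊₃. -/
def Exceptional (H : SimpleGraph W) : Prop :=
  (∃ f : W → Fin 7, Function.Injective f ∧ ∀ u v : W, H.Adj u v → TH3.Adj (f u) (f v)) ∨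
  (∃ f : W → Fin 6, Function.Injective f ∧ ∀ u v : W, H.Adj u v → TR3.Adj (f u) (f v))

/-- `X` is a `k`-inseparable set of `G`. -/
def KInseparable (G : SimpleGraph V) (k : ℕ) (X : Set V) : Prop :=
  k < X.ncard ∧
    ¬ ∃ Y S Z : Set V, IsSeparation G Y S Z ∧ S.ncard ≤ k ∧
      (X ∩ Y).Nonempty ∧ (X ∩ Z).Nonempty

/-- A triconnected region: a maximal 2-inseparable set of size ≥ 4. -/
def TriconnectedRegion (G : SimpleGraph V) (R : Set V) : Prop :=
  KInseparable G 2 R ∧ 4 ≤ R.ncard ∧ ∀ R' : Set V, R ⊂ R' → ¬ KInseparable G 2 R'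

/-- `H` is a topological subgraph of `G`. -/
def IsTopologicalSubgraph (H : SimpleGraph W) (G : SimpleGraph V) : Prop :=
  ∃ (φ : W → V) (P : ∀ u v : W, H.Adj u v → G.Walk (φ u) (φ v)),
    Function.Injective φ ∧
    (∀ u v (h : H.Adj u v), (P u v h).IsPath) ∧
    (∀ u v (h : H.Adj u v), P u v h = (P v u h.symm).reverse) ∧
    (∀ u v (h : H.Adj u v), ∀ x ∈ (P u v h).support,
      x ∈ Set.range φ → x = φ u ∨ x = φ v) ∧
    (∀ u v (h : H.Adj u v), ∀ u' v' (h' : H.Adj u' v'), s(u, v) ≠ s(u', v') →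
      ∀ x ∈ (P u v h).support, x ∈ (P u' v' h').support →
        (x = φ u ∨ x = φ v) ∧ (x = φ u' ∨ x = φ v'))

/-- A quasi-4-connected region of a 3-connected graph. -/
def Quasi4Region (G : SimpleGraph V) (R : Set V) : Prop :=
  IsFaithfulMinor G R (torso G R) ∧ Quasi4Connected (torso G R) ∧
    ∀ C : Set V, IsCompOutside G R C → (Nbhd G C).ncard = 3

/-- A split vertex of a separation (Y₀,S₀,Z₀). -/
def SplitVertex (G : SimpleGraph V) (S₀ Z₀ : Set V) (z : V) : Prop :=
  z ∈ Z₀ ∧ ∀ C : Set V, IsCompOutside G (S₀ ∪ {z}) C → (Nbhd G C).ncard = 3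

/-- The graph obtained from `G` by contracting the edge `s₁s₂` onto `s₁`. -/
def contractEdge (G : SimpleGraph V) (s₁ s₂ : V) : SimpleGraph ({s₂}ᶜ : Set V) where
  Adj u v := u ≠ v ∧ (G.Adj (u : V) (v : V) ∨
    ((u : V) = s₁ ∧ G.Adj (v : V) s₂) ∨ ((v : V) = s₁ ∧ G.Adj (u : V) s₂))
  symm := by
    constructor
    rintro u v ⟨hne, h | h | h⟩
    · exact ⟨hne.symm, Or.inl h.symm⟩
    · exact ⟨hne.symm, Or.inr (Or.inr h)⟩
    · exact ⟨hne.symm, Or.inr (Or.inl h)⟩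
  loopless := by
    constructor
    intro u h
    exact h.1 rfl

/-- `s t` are the endvertices of a crossedge of two crossing non-degenerate minimal
separations of the tangle `T`, with `s ∈ S₁` and `t ∈ S₂`. -/
def IsNondegCrossedge (G : SimpleGraph V) (T : Set (Set V × Set V × Set V))
    (s t : V) : Prop :=
  ∃ p q : Set V × Set V × Set V,
    IsMinimalIn T p ∧ IsMinimalIn T q ∧
    ¬ Degenerate G p.1 p.2.1 p.2.2 ∧ ¬ Degenerate G q.1 q.2.1 q.2.2 ∧
    ¬ SepOrthogonal p q ∧ G.Adj s t ∧ p.2.1 ∩ q.1 = {s} ∧ q.2.1 ∩ p.1 = {t}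

/-- If (Y,S,Z) ∈ 𝒯_min and (Y',S',Z') ∈ 𝒯 with S' ⊆ S, then
Z ∪ (S ∖ S') ⊆ Z'. -/
theorem statement6 {V : Type*} [Fintype V] (G : SimpleGraph V) (k : ℕ)
    (T : Set (Set V × Set V × Set V)) (hT : IsTangle G k T)
    (Y S Z Y' S' Z' : Set V)
    (h : IsMinimalIn T (Y, S, Z)) (h' : (Y', S', Z') ∈ T) (hss : S' ⊆ S) :
    Z ∪ (S \ S') ⊆ Z' := by
  obtain ⟨hmem, hmin⟩ := h
  obtain ⟨hsep, hordS⟩ := hT.1 _ hmem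
  obtain ⟨hsep', hord'⟩ := hT.1 _ h'
  obtain ⟨hYS, hYZ, hSZ, huniv, hedge⟩ := hsep
  obtain ⟨hYS', hYZ', hSZ', huniv', hedge'⟩ := hsep'
  set Zr : Set V := Z ∩ Z' with hZr
  set Br : Set V := (S ∪ Z) ∩ (S' ∪ Z') with hBr
  set Sr : Set V := Br \ Zr with hSrdef
  set Yr : Set V := Brᶜ with hYrdef
  have hY : ∀ x, x ∈ Y ↔ x ∉ S ∪ Z := by
    intro x
    constructor
    · rintro hx (h1 | h1)
      · exact hYS.le_bot ⟨hx, h1⟩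
      · exact hYZ.le_bot ⟨hx, h1⟩
    · intro hx
      have hx2 : x ∈ Y ∪ S ∪ Z := huniv.symm ▸ Set.mem_univ x
      rcases hx2 with (h1 | h1) | h1
      · exact h1
      · exact absurd (Or.inl h1) hx
      · exact absurd (Or.inr h1) hx
  have hY' : ∀ x, x ∈ Y' ↔ x ∉ S' ∪ Z' := by
    intro x
    constructor
    · rintro hx (h1 | h1)
      · exact hYS'.le_bot ⟨hx, h1⟩
      · exact hYZ'.le_bot ⟨hx, h1⟩
    · intro hx
      have hx2 : x ∈ Y' ∪ S' ∪ Z' := huniv'.symm ▸ Set.mem_univ x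
      rcases hx2 with (h1 | h1) | h1
      · exact h1
      · exact absurd (Or.inl h1) hx
      · exact absurd (Or.inr h1) hx
  have hZrBr : Zr ⊆ Br := fun x hx => ⟨Or.inr hx.1, Or.inr hx.2⟩
  have hSrS : Sr ⊆ S := by
    rintro x ⟨hxB, hxZ⟩
    rcases hxB.1 with h1 | h1
    · exact h1
    · rcases hxB.2 with h2 | h2
      · exact hss h2
      · exact absurd ⟨h1, h2⟩ hxZ
  have sep_r : IsSeparation G Yr Sr Zr := by
    refine ⟨?_, ?_, Set.disjoint_sdiff_left, ?_, ?_⟩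
    · exact Set.disjoint_left.2 fun x hx hx2 => hx hx2.1
    · exact Set.disjoint_left.2 fun x hx hx2 => hx (hZrBr hx2)
    · apply Set.eq_univ_of_forall
      intro x
      by_cases hx : x ∈ Br
      · by_cases hz : x ∈ Zr
        · exact Or.inr hz
        · exact Or.inl (Or.inr ⟨hx, hz⟩)
      · exact Or.inl (Or.inl hx)
    · intro y hy z hz hadj
      have hy2 : y ∉ S ∪ Z ∨ y ∉ S' ∪ Z' := by
        by_contra hc
        push_neg at hc
        exact hy ⟨hc.1, hc.2⟩
      rcases hy2 with h4 | h4
      · exact hedge y ((hY y).2 h4) z hz.1 hadj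
      · exact hedge' y ((hY' y).2 h4) z hz.2 hadj
  have ord_r : Sr.ncard < k :=
    lt_of_le_of_lt (Set.ncard_le_ncard hSrS (Set.toFinite S)) hordS
  rcases hT.2.1 Yr Sr Zr sep_r ord_r with hr | hr
  · -- (Yr, Sr, Zr) ∈ T : use minimality
    have hsub : Sr ∪ Zr ⊆ S ∪ Z := by
      rintro x (hx | hx)
      · exact hx.1.1
      · exact Or.inr hx.1
    have hle : SepLE (Yr, Sr, Zr) (Y, S, Z) := by
      rcases hsub.ssubset_or_eq with h1 | h1
      · exact Or.inl h1
      · exact Or.inr ⟨h1, hSrS⟩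
    have heq := hmin (Yr, Sr, Zr) hr hle
    have hSeq : Sr = S := congrArg (fun p => p.2.1) heq
    have hZeq : Zr = Z := congrArg (fun p => p.2.2) heq
    rintro x (hx | hx)
    · exact (hZeq.symm ▸ hx : x ∈ Zr).2
    · have hxS : x ∈ Sr := hSeq.symm ▸ hx.1
      rcases hxS.1.2 with h2 | h2
      · exact absurd h2 hx.2
      · exact h2
  · -- (Zr, Sr, Yr) ∈ T : contradiction with (T2)
    exfalso
    rcases hT.2.2.1 _ hmem _ h' _ hr with ⟨x, hx⟩ | ⟨u, v, hadj, h1, h2, h3⟩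
    · exact hx.2 (hZrBr hx.1)
    · rcases h3 with hu | hv
      · have hu2 : u ∉ S ∪ Z ∨ u ∉ S' ∪ Z' := by
          by_contra hc
          push_neg at hc
          exact hu ⟨hc.1, hc.2⟩
        rcases hu2 with h4 | h4
        · have hvZ : v ∈ Z := h1.resolve_left fun hz => h4 (Or.inr hz)
          exact hedge u ((hY u).2 h4) v hvZ hadj
        · have hvZ : v ∈ Z' := h2.resolve_left fun hz => h4 (Or.inr hz)
          exact hedge' u ((hY' u).2 h4) v hvZ hadj
      · have hv2 : v ∉ S ∪ Z ∨ v ∉ S' ∪ Z' := by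
          by_contra hc
          push_neg at hc
          exact hv ⟨hc.1, hc.2⟩
        rcases hv2 with h4 | h4
        · have huZ : u ∈ Z := h1.resolve_right fun hz => h4 (Or.inr hz)
          exact hedge v ((hY v).2 h4) u huZ hadj.symm
        · have huZ : u ∈ Z' := h2.resolve_right fun hz => h4 (Or.inr hz)
          exact hedge' v ((hY' v).2 h4) u huZ hadj.symm
end

section
/- Let G be a finite simple graph and R ⊆ V(G). Then R is a triconnected region of G if and only if the torso G⟦R⟧ is 3-connected, G⟦R⟧ is a topological subgraph of G, and every connected component C of G − R satisfies |N(V(C))| ≤ 2. -/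
variable {V : Type*} {W : Type*}

section Aux

open SimpleGraph

variable {V : Type*} {G : SimpleGraph V}

/-- There is a walk from `a` to `b` all of whose vertices lie in `X`. -/
def WalkIn (G : SimpleGraph V) (X : Set V) (a b : V) : Prop :=
  ∃ w : G.Walk a b, ∀ x ∈ w.support, x ∈ X

namespace WalkIn

lemma refl {X : Set V} {a : V} (ha : a ∈ X) : WalkIn G X a a :=
  ⟨.nil, by simp [ha]⟩

lemma mem_left {X : Set V} {a b : V} (h : WalkIn G X a b) : a ∈ X :=
  h.choose_spec a h.choose.start_mem_support

lemma mem_right {X : Set V} {a b : V} (h : WalkIn G X a b) : b ∈ X :=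
  h.choose_spec b h.choose.end_mem_support

lemma symm {X : Set V} {a b : V} (h : WalkIn G X a b) : WalkIn G X b a := by
  obtain ⟨w, hw⟩ := h
  exact ⟨w.reverse, by simpa using hw⟩

lemma trans {X : Set V} {a b c : V} (h : WalkIn G X a b) (h' : WalkIn G X b c) :
    WalkIn G X a c := by
  obtain ⟨w, hw⟩ := h; obtain ⟨w', hw'⟩ := h'
  refine ⟨w.append w', fun x hx => ?_⟩
  rcases (SimpleGraph.Walk.mem_support_append_iff _ _).1 hx with h | h
  · exact hw x h
  · exact hw' x h

lemma step {X : Set V} {a b : V} (ha : a ∈ X) (hb : b ∈ X) (h : G.Adj a b) :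
    WalkIn G X a b := ⟨.cons h .nil, by simp [ha, hb]⟩

lemma mono {X Y : Set V} {a b : V} (hXY : X ⊆ Y) (h : WalkIn G X a b) :
    WalkIn G Y a b := by
  obtain ⟨w, hw⟩ := h; exact ⟨w, fun x hx => hXY (hw x hx)⟩

end WalkIn

/-- All vertices on a walk in `X` starting at `v` are `WalkIn`-reachable from `v`. -/
lemma walkIn_of_mem_support {X : Set V} {a b : V} (w : G.Walk a b)
    (hw : ∀ x ∈ w.support, x ∈ X) : ∀ x ∈ w.support, WalkIn G X a x := by
  induction w with
  | nil => intro x hx; simp at hx; subst hx; exact WalkIn.refl (hw _ (by simp))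
  | @cons u c d h p ih =>
    intro x hx
    have hu : u ∈ X := hw u (by simp)
    have hc : c ∈ X := hw c (by simp)
    rcases (SimpleGraph.Walk.mem_support_iff _).1 hx with rfl | hx'
    · exact WalkIn.refl hu
    · have hx'' : x ∈ p.support := by
        simpa using hx'
      exact (WalkIn.step hu hc h).trans
        (ih (fun y hy => hw y (by simp [hy])) x hx'')

/-- The component of `v` in `G - S`. -/
def gComp (G : SimpleGraph V) (S : Set V) (v : V) : Set V :=
  {u | WalkIn G Sᶜ v u}

lemma gComp_self {S : Set V} {v : V} (hv : v ∉ S) : v ∈ gComp G S v :=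
  WalkIn.refl hv

lemma gComp_subset_compl {S : Set V} {v : V} : gComp G S v ⊆ Sᶜ :=
  fun _ hu => hu.mem_right

lemma gComp_closed {S : Set V} {v u w : V} (hu : u ∈ gComp G S v)
    (h : G.Adj u w) (hw : w ∉ S) : w ∈ gComp G S v :=
  hu.trans (WalkIn.step hu.mem_right hw h)

lemma gComp_walkIn {S : Set V} {v : V} :
    ∀ a ∈ gComp G S v, ∀ b ∈ gComp G S v, WalkIn G (gComp G S v) a b := by
  have key : ∀ u ∈ gComp G S v, WalkIn G (gComp G S v) v u := by
    intro u hu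
    obtain ⟨w, hw⟩ := hu
    have := walkIn_of_mem_support w hw
    obtain ⟨w', hw'⟩ := (⟨w, hw⟩ : WalkIn G Sᶜ v u)
    exact ⟨w', fun x hx => walkIn_of_mem_support w' hw' x hx⟩
  intro a ha b hb
  exact ((key a ha).symm).trans (key b hb)

lemma gComp_eq_of_mem {S : Set V} {v u : V} (hu : u ∈ gComp G S v) :
    gComp G S u = gComp G S v := by
  ext x
  constructor
  · intro hx; exact hu.trans hx
  · intro hx; exact (hu.symm : WalkIn G Sᶜ u v).trans hx

lemma nbhd_gComp_subset {S : Set V} {v : V} : Nbhd G (gComp G S v) ⊆ S := by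
  rintro w ⟨hwn, u, hu, hadj⟩
  by_contra hwS
  exact hwn (gComp_closed hu hadj hwS)

/-- An edge on the boundary of a subset of a connected set. -/
lemma exists_boundary {C D : Set V}
    (hconn : ∀ a ∈ C, ∀ b ∈ C, WalkIn G C a b)
    (hD : D ⊆ C) (hD0 : D.Nonempty) (hCD : (C \ D).Nonempty) :
    ∃ x ∈ C \ D, ∃ d ∈ D, G.Adj d x := by
  obtain ⟨d, hd⟩ := hD0
  obtain ⟨c, hc⟩ := hCD
  obtain ⟨w, hw⟩ := hconn d (hD hd) c hc.1
  clear hconn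
  induction w with
  | nil => exact absurd hd hc.2
  | @cons u a b h p ih =>
    by_cases haD : a ∈ D
    · exact ih haD hc (fun x hx => hw x (by simp [hx]))
    · exact ⟨a, ⟨hw a (by simp), haD⟩, u, hd, h⟩

end Aux
section Aux2

open SimpleGraph

variable {V : Type*} {G : SimpleGraph V} {R : Set V}

/-- Hom from induced subgraph to ambient graph. -/
def inducedHom (G : SimpleGraph V) (X : Set V) : G.induce X →g G :=
  ⟨Subtype.val, fun {a b} h => h⟩

lemma reachable_induce_of_walkIn {X : Set V} {a b : V} (w : G.Walk a b)
    (hw : ∀ x ∈ w.support, x ∈ X) :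
    (G.induce X).Reachable ⟨a, hw a w.start_mem_support⟩ ⟨b, hw b w.end_mem_support⟩ := by
  induction w with
  | nil => rfl
  | @cons u c d h p ih =>
    have h1 : (G.induce X).Adj ⟨u, hw u (by simp)⟩ ⟨c, hw c (by simp)⟩ := h
    exact h1.reachable.trans (ih (fun x hx => hw x (by simp [hx])))

lemma walkIn_of_induce_connected {X : Set V} (hc : (G.induce X).Connected) :
    ∀ a ∈ X, ∀ b ∈ X, WalkIn G X a b := by
  intro a ha b hb
  obtain ⟨w⟩ := hc.preconnected ⟨a, ha⟩ ⟨b, hb⟩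
  refine ⟨w.map (inducedHom G X), fun x hx => ?_⟩
  erw [SimpleGraph.Walk.support_map] at hx
  obtain ⟨y, _, rfl⟩ := List.mem_map.1 hx
  exact y.2

lemma induce_connected_of_walkIn {X : Set V} (hne : X.Nonempty)
    (h : ∀ a ∈ X, ∀ b ∈ X, WalkIn G X a b) : (G.induce X).Connected := by
  have hne' : Nonempty X := ⟨⟨hne.choose, hne.choose_spec⟩⟩
  refine ⟨fun a b => ?_⟩
  obtain ⟨w, hw⟩ := h a a.2 b b.2
  have := reachable_induce_of_walkIn w hw
  convert this <;> simp

/-- Walks avoiding `S` stay inside sets that are closed under edges avoiding `S`. -/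
lemma walkIn_closed {P S : Set V} (hcl : ∀ a ∈ P, ∀ b, G.Adj a b → b ∉ S → b ∈ P)
    {v u : V} (h : WalkIn G Sᶜ v u) (hv : v ∈ P) : u ∈ P := by
  obtain ⟨w, hw⟩ := h
  induction w with
  | nil => exact hv
  | @cons a c d hadj p ih =>
    exact ih (hcl a hv c hadj (hw c (by simp))) (fun x hx => hw x (by simp [hx]))

lemma IsCompOutside.nonempty {C : Set V} (hC : IsCompOutside G R C) : C.Nonempty := by
  obtain ⟨x⟩ := hC.2.1.nonempty
  exact ⟨x, x.2⟩

lemma IsCompOutside.walkIn {C : Set V} (hC : IsCompOutside G R C) :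
    ∀ a ∈ C, ∀ b ∈ C, WalkIn G C a b :=
  walkIn_of_induce_connected hC.2.1

lemma IsCompOutside.nbhd_subset {C : Set V} (hC : IsCompOutside G R C) :
    Nbhd G C ⊆ R := by
  rintro w ⟨hwn, u, hu, hadj⟩
  by_contra hwR
  exact hwn (hC.2.2 u hu w hwR hadj)

lemma isCompOutside_gComp {v : V} (hv : v ∉ R) : IsCompOutside G R (gComp G R v) := by
  refine ⟨fun u hu => gComp_subset_compl hu, ?_, ?_⟩
  · exact induce_connected_of_walkIn ⟨v, gComp_self hv⟩ gComp_walkIn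
  · intro u hu w hw hadj
    exact gComp_closed hu hadj hw

lemma IsCompOutside.eq_gComp {C : Set V} {v : V} (hC : IsCompOutside G R C)
    (hv : v ∈ C) : C = gComp G R v := by
  ext u
  constructor
  · intro hu
    exact (hC.walkIn v hv u hu).mono (fun x hx => hC.1 hx)
  · intro hu
    exact walkIn_closed (fun a ha b hab hb => hC.2.2 a ha b hb hab) hu hv

lemma IsCompOutside.eq_or_disjoint {C C' : Set V} (hC : IsCompOutside G R C)
    (hC' : IsCompOutside G R C') (h : (C ∩ C').Nonempty) : C = C' := by
  obtain ⟨x, hx1, hx2⟩ := h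
  rw [hC.eq_gComp hx1, hC'.eq_gComp hx2]

/-- Membership trichotomy for separations. -/
lemma IsSeparation.mem_tri {Y S Z : Set V} (h : IsSeparation G Y S Z) (x : V) :
    x ∈ Y ∨ x ∈ S ∨ x ∈ Z := by
  have hx : x ∈ Y ∪ S ∪ Z := by rw [h.2.2.2.1]; trivial
  rcases hx with (h' | h') | h'
  · exact Or.inl h'
  · exact Or.inr (Or.inl h')
  · exact Or.inr (Or.inr h')

lemma IsSeparation.gComp_subset {Y S Z : Set V} (h : IsSeparation G Y S Z)
    {v : V} (hv : v ∈ Z) : gComp G S v ⊆ Z := by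
  intro u hu
  refine walkIn_closed (fun a ha b hab hb => ?_) hu hv
  rcases h.mem_tri b with hb' | hb' | hb'
  · exact absurd (hab.symm) (h.2.2.2.2 b hb' a ha)
  · exact absurd hb' hb
  · exact hb'

end Aux2
section Aux3

open SimpleGraph

variable {V : Type*} [Fintype V] {G : SimpleGraph V}

lemma walkIn_union {D D' : Set V}
    (hDc : ∀ a ∈ D, ∀ b ∈ D, WalkIn G D a b)
    (hD'c : ∀ a ∈ D', ∀ b ∈ D', WalkIn G D' a b)
    {d x : V} (hd : d ∈ D) (hx : x ∈ D') (hadj : G.Adj d x) :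
    ∀ a ∈ D ∪ D', ∀ b ∈ D ∪ D', WalkIn G (D ∪ D') a b := by
  have toD : ∀ a ∈ D ∪ D', WalkIn G (D ∪ D') a d := by
    rintro a (ha | ha)
    · exact (hDc a ha d hd).mono Set.subset_union_left
    · exact ((hD'c a ha x hx).mono Set.subset_union_right).trans
        (WalkIn.step (Or.inr hx) (Or.inl hd) hadj.symm)
  intro a ha b hb
  exact (toD a ha).trans (toD b hb).symm

lemma nbhd_submod (A X Y : Set V) :
    ((Nbhd G (X ∪ Y)) \ A).ncard + ((Nbhd G (X ∩ Y)) \ A).ncard ≤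
      ((Nbhd G X) \ A).ncard + ((Nbhd G Y) \ A).ncard := by
  set P := Nbhd G (X ∪ Y) \ A with hP
  set Q := Nbhd G (X ∩ Y) \ A with hQ
  set P' := Nbhd G X \ A with hP'
  set Q' := Nbhd G Y \ A with hQ'
  have h1 : P ∪ Q ⊆ P' ∪ Q' := by
    rintro v (⟨⟨hvn, u, hu, hadj⟩, hvA⟩ | ⟨⟨hvn, u, hu, hadj⟩, hvA⟩)
    · rcases hu with hu | hu
      · exact Or.inl ⟨⟨fun h => hvn (Or.inl h), u, hu, hadj⟩, hvA⟩
      · exact Or.inr ⟨⟨fun h => hvn (Or.inr h), u, hu, hadj⟩, hvA⟩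
    · by_cases hvX : v ∈ X
      · exact Or.inr ⟨⟨fun h => hvn ⟨hvX, h⟩, u, hu.2, hadj⟩, hvA⟩
      · exact Or.inl ⟨⟨hvX, u, hu.1, hadj⟩, hvA⟩
  have h2 : P ∩ Q ⊆ P' ∩ Q' := by
    rintro v ⟨⟨⟨hvn, u, hu, hadj⟩, hvA⟩, ⟨⟨hvn', u', hu', hadj'⟩, _⟩⟩
    exact ⟨⟨⟨fun h => hvn (Or.inl h), u', hu'.1, hadj'⟩, hvA⟩,
      ⟨⟨fun h => hvn (Or.inr h), u', hu'.2, hadj'⟩, hvA⟩⟩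
  calc P.ncard + Q.ncard = (P ∪ Q).ncard + (P ∩ Q).ncard :=
        (Set.ncard_union_add_ncard_inter P Q).symm
    _ ≤ (P' ∪ Q').ncard + (P' ∩ Q').ncard :=
        add_le_add (Set.ncard_le_ncard h1) (Set.ncard_le_ncard h2)
    _ = P'.ncard + Q'.ncard := Set.ncard_union_add_ncard_inter P' Q'

/-- Key lemma: if a connected set is covered by connected subsets each having at
most 2 neighbours (outside `A`), then it has at most 2 neighbours outside `A`. -/
lemma star_lemma (G : SimpleGraph V) :
    ∀ (n : ℕ) (C A : Set V), C.ncard ≤ n → C.Nonempty → C ∩ A = ∅ →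
    (∀ a ∈ C, ∀ b ∈ C, WalkIn G C a b) →
    (∀ v ∈ C, ∃ D, D ⊆ C ∧ v ∈ D ∧ (∀ a ∈ D, ∀ b ∈ D, WalkIn G D a b) ∧
      (Nbhd G D \ A).ncard ≤ 2) →
    (Nbhd G C \ A).ncard ≤ 2 := by
  intro n
  induction n with
  | zero =>
    intro C A hn hne _ _ _
    rw [Nat.le_zero, Set.ncard_eq_zero] at hn
    exact absurd hn hne.ne_empty
  | succ n ih =>
    intro C A hCn hne hCA hconn hcov
    have hnotA : ∀ x ∈ C, x ∉ A := by
      intro x hx hxA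
      exact absurd hCA (Set.nonempty_iff_ne_empty.1 ⟨x, hx, hxA⟩)
    -- maximal element of the family F
    set F : Set (Set V) := {D | D ⊆ C ∧ D.Nonempty ∧
        (∀ a ∈ D, ∀ b ∈ D, WalkIn G D a b) ∧ (Nbhd G D \ A).ncard ≤ 2} with hF
    have hFne : F.Nonempty := by
      obtain ⟨v, hv⟩ := hne
      obtain ⟨D, hD1, hD2, hD3, hD4⟩ := hcov v hv
      exact ⟨D, hD1, ⟨v, hD2⟩, hD3, hD4⟩
    obtain ⟨D, hDF, hDmax⟩ := Set.Finite.exists_maximalFor id F (Set.toFinite F) hFne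
    simp only [id] at hDmax
    obtain ⟨hDC, hDne, hDconn, hDcard⟩ := hDF
    by_cases hCD : C ⊆ D
    · have : C = D := le_antisymm hCD hDC
      rw [this]; exact hDcard
    -- boundary vertex x ∈ C \ D adjacent to d ∈ D
    have hCDne : (C \ D).Nonempty := by
      obtain ⟨c, hc⟩ := Set.not_subset.1 hCD
      exact ⟨c, hc.1, hc.2⟩
    obtain ⟨x, hx, d, hd, hdx⟩ := exists_boundary hconn hDC hDne hCDne
    obtain ⟨Dx, hDx1, hDx2, hDx3, hDx4⟩ := hcov x hx.1
    -- the union U is connected, contains D strictly, so it has ≥ 3 neighbours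
    set U := D ∪ Dx with hU
    have hUconn := walkIn_union hDconn hDx3 hd hDx2 hdx
    have hU3 : ¬ ((Nbhd G U \ A).ncard ≤ 2) := by
      intro hle
      have hUF : U ∈ F := ⟨Set.union_subset hDC hDx1, ⟨d, Or.inl hd⟩, hUconn, hle⟩
      have := hDmax hUF Set.subset_union_left
      exact hx.2 (this (Or.inr hDx2 : x ∈ U))
    by_cases hInt : (D ∩ Dx).Nonempty
    · -- pendant blob case
      have hsub4 : (Nbhd G U \ A).ncard + (Nbhd G (D ∩ Dx) \ A).ncard ≤ 4 := by
        have := nbhd_submod (G := G) A D Dx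
        rw [← hU] at this
        omega
      have hU3' : 3 ≤ (Nbhd G U \ A).ncard := by omega
      have hE1 : (Nbhd G (D ∩ Dx) \ A).ncard ≤ 1 := by omega
      set E := D ∩ Dx with hE
      have hEC : E ⊆ C := fun y hy => hDC hy.1
      have hxE : x ∉ E := fun h => hx.2 h.1
      -- boundary vertex w of E in C
      obtain ⟨w, hw, e, he, hew⟩ := exists_boundary hconn hEC hInt ⟨x, hx.1, hxE⟩
      have hwNE : w ∈ Nbhd G E \ A := ⟨⟨hw.2, e, he, hew⟩, hnotA w hw.1⟩
      have hNEw : Nbhd G E \ A = {w} := by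
        refine (Set.eq_of_subset_of_ncard_le (Set.singleton_subset_iff.2 hwNE) ?_ (Set.toFinite _)).symm
        simpa using hE1
      set C₂ := C \ E with hC₂
      set A₂ := A ∪ E with hA₂
      have hwC₂ : w ∈ C₂ := hw
      -- C₂ is connected
      have hC₂conn : ∀ a ∈ C₂, ∀ b ∈ C₂, WalkIn G C₂ a b := by
        set K := {u | u ∈ C₂ ∧ WalkIn G C₂ u w} with hK
        have hwK : w ∈ K := ⟨hwC₂, WalkIn.refl hwC₂⟩
        have hKC : K ∪ E ⊆ C := fun y hy => hy.elim (fun h => h.1.1) (fun h => hEC h)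
        have hKall : C₂ ⊆ K := by
          by_contra hcon
          obtain ⟨z, hz⟩ := Set.not_subset.1 hcon
          have hzne : (C \ (K ∪ E)).Nonempty :=
            ⟨z, hz.1.1, fun h => h.elim (fun h' => hz.2 h') (fun h' => hz.1.2 h')⟩
          obtain ⟨y, hy, t, ht, hty⟩ := exists_boundary hconn hKC ⟨w, Or.inl hwK⟩ hzne
          have hyC₂ : y ∈ C₂ := ⟨hy.1, fun h => hy.2 (Or.inr h)⟩
          rcases ht with ht | ht
          · exact hy.2 (Or.inl ⟨hyC₂, (WalkIn.step hyC₂ ht.1 hty.symm).trans ht.2⟩)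
          · have : y ∈ Nbhd G E \ A :=
              ⟨⟨fun h => hy.2 (Or.inr h), t, ht, hty⟩, hnotA y hy.1⟩
            rw [hNEw] at this
            exact hy.2 (Or.inl (this ▸ hwK))
        intro a ha b hb
        exact ((hKall ha).2).trans ((hKall hb).2).symm
      -- coverage of C₂ with respect to A₂
      have hC₂cov : ∀ v ∈ C₂, ∃ D', D' ⊆ C₂ ∧ v ∈ D' ∧
          (∀ a ∈ D', ∀ b ∈ D', WalkIn G D' a b) ∧ (Nbhd G D' \ A₂).ncard ≤ 2 := by
        intro v hv
        obtain ⟨Dv, hDv1, hDv2, hDv3, hDv4⟩ := hcov v hv.1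
        set Kv := gComp G ((Dv \ E)ᶜ) v with hKv
        have hvK : v ∈ Dv \ E := ⟨hDv2, hv.2⟩
        have hKsub : Kv ⊆ Dv \ E := by
          intro y hy
          have := gComp_subset_compl hy
          rwa [compl_compl] at this
        refine ⟨Kv, ?_, gComp_self (by simpa using hvK), gComp_walkIn, ?_⟩
        · exact fun y hy => ⟨hDv1 (hKsub hy).1, (hKsub hy).2⟩
        · refine le_trans (Set.ncard_le_ncard ?_) hDv4
          rintro u ⟨⟨hun, t, ht, hadj⟩, huA⟩
          have huE : u ∉ E := fun h => huA (Or.inr h)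
          have huDv : u ∉ Dv := by
            intro h
            exact hun (gComp_closed ht hadj (by simpa using ⟨h, huE⟩))
          exact ⟨⟨huDv, t, (hKsub ht).1, hadj⟩, fun h => huA (Or.inl h)⟩
      -- apply induction hypothesis
      have hC₂n : C₂.ncard ≤ n := by
        have hlt : C₂ ⊂ C := by
          refine ⟨Set.diff_subset, fun hsub => ?_⟩
          obtain ⟨e', he'⟩ := hInt
          exact (hsub (hEC he')).2 he'
        have := Set.ncard_lt_ncard hlt (Set.toFinite C)
        omega
      have hC₂A₂ : C₂ ∩ A₂ = ∅ := by
        ext y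
        simp only [Set.mem_inter_iff, Set.mem_union, Set.mem_empty_iff_false, iff_false]
        rintro ⟨hy, hy' | hy'⟩
        · exact hnotA y hy.1 hy'
        · exact hy.2 hy'
      have hfinal := ih C₂ A₂ hC₂n ⟨w, hwC₂⟩ hC₂A₂ hC₂conn hC₂cov
      refine le_trans (Set.ncard_le_ncard ?_) hfinal
      rintro r ⟨⟨hrn, c, hc, hadj⟩, hrA⟩
      have hrE : r ∉ E := fun h => hrn (hEC h)
      have hcE : c ∉ E := by
        intro h
        have : r ∈ Nbhd G E \ A := ⟨⟨hrE, c, h, hadj⟩, hrA⟩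
        rw [hNEw] at this
        exact hrn (this ▸ hw.1)
      exact ⟨⟨fun h => hrn h.1, c, ⟨hc, hcE⟩, hadj⟩,
        fun h => h.elim hrA hrE⟩
    · -- disjoint case: U would have ≤ 2 neighbours, contradiction
      exfalso
      apply hU3
      have hdDx : d ∉ Dx := fun h => hInt ⟨d, hd, h⟩
      have hxD : x ∉ D := hx.2
      have hxND : x ∈ Nbhd G D \ A := ⟨⟨hxD, d, hd, hdx⟩, hnotA x hx.1⟩
      have hdND : d ∈ Nbhd G Dx \ A := ⟨⟨hdDx, x, hDx2, hdx.symm⟩, hnotA d (hDC hd)⟩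
      have hsub : Nbhd G U \ A ⊆ ((Nbhd G D \ A) \ {x}) ∪ ((Nbhd G Dx \ A) \ {d}) := by
        rintro v ⟨⟨hvn, u, hu, hadj⟩, hvA⟩
        rcases hu with hu | hu
        · exact Or.inl ⟨⟨⟨fun h => hvn (Or.inl h), u, hu, hadj⟩, hvA⟩,
            fun h => hvn (h ▸ (Or.inr hDx2 : x ∈ U))⟩
        · exact Or.inr ⟨⟨⟨fun h => hvn (Or.inr h), u, hu, hadj⟩, hvA⟩,
            fun h => hvn (h ▸ (Or.inl hd : d ∈ U))⟩
      refine le_trans (Set.ncard_le_ncard hsub) (le_trans (Set.ncard_union_le _ _) ?_)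
      have h1 : ((Nbhd G D \ A) \ {x}).ncard ≤ 1 := by
        have := Set.ncard_diff_singleton_of_mem hxND
        omega
      have h2 : ((Nbhd G Dx \ A) \ {d}).ncard ≤ 1 := by
        have := Set.ncard_diff_singleton_of_mem hdND
        omega
      omega

end Aux3
section Aux4

open SimpleGraph

variable {V : Type*} [Fintype V] {G : SimpleGraph V}

lemma IsSeparation.flip {Y S Z : Set V} (h : IsSeparation G Y S Z) :
    IsSeparation G Z S Y := by
  obtain ⟨h1, h2, h3, h4, h5⟩ := h
  exact ⟨h3.symm, h2.symm, h1.symm, by rw [← h4]; ext x; simp; tauto,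
    fun z hz y hy hadj => h5 y hy z hz hadj.symm⟩

/-- From non-2-inseparability of `R ∪ {v}`, a small connected blob around `v` inside `C`. -/
lemma exists_blob {R C : Set V} (hins : KInseparable G 2 R) (hC : IsCompOutside G R C)
    {v : V} (hv : v ∈ C) (hcard4 : 4 ≤ R.ncard)
    (hnk : ¬ KInseparable G 2 (R ∪ {v})) :
    ∃ D, D ⊆ C ∧ v ∈ D ∧ (∀ a ∈ D, ∀ b ∈ D, WalkIn G D a b) ∧ (Nbhd G D).ncard ≤ 2 := by
  have hvR : v ∉ R := hC.1 hv
  rw [KInseparable] at hnk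
  push_neg at hnk
  have hcd : 2 < (R ∪ {v}).ncard :=
    lt_of_lt_of_le (by omega) (Set.ncard_le_ncard Set.subset_union_left)
  obtain ⟨Y, S, Z, hsep, hS, hY, hZ⟩ := hnk hcd
  -- R is not split by (Y,S,Z)
  have hkey : ∀ Y' Z' : Set V, IsSeparation G Y' S Z' → ((R ∪ {v}) ∩ Z').Nonempty →
      R ∩ Z' = ∅ →
      ∃ D, D ⊆ C ∧ v ∈ D ∧ (∀ a ∈ D, ∀ b ∈ D, WalkIn G D a b) ∧ (Nbhd G D).ncard ≤ 2 := by
    intro Y' Z' hsep' hZ' hRZ'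
    have hvZ : v ∈ Z' := by
      obtain ⟨u, hu1, hu2⟩ := hZ'
      rcases hu1 with hu1 | hu1
      · exact absurd (Set.eq_empty_iff_forall_notMem.1 hRZ' u ⟨hu1, hu2⟩) not_false
      · simp at hu1; subst hu1; exact hu2
    have hvS : v ∉ S := fun h => (hsep'.2.2.1.ne_of_mem h hvZ) rfl
    set D := gComp G S v with hD
    have hDZ : D ⊆ Z' := hsep'.gComp_subset hvZ
    have hDC : D ⊆ C := by
      intro u hu
      have hwalk : WalkIn G Rᶜ v u := (gComp_walkIn v (gComp_self hvS) u hu).mono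
        (fun x hx => fun hxR =>
          (Set.eq_empty_iff_forall_notMem.1 hRZ' x ⟨hxR, hDZ hx⟩))
      exact walkIn_closed (fun a ha b hab hb => hC.2.2 a ha b hb hab) hwalk hv
    refine ⟨D, hDC, gComp_self hvS, gComp_walkIn, ?_⟩
    exact le_trans (Set.ncard_le_ncard nbhd_gComp_subset) hS
  by_cases hRY : (R ∩ Y).Nonempty
  · by_cases hRZ : (R ∩ Z).Nonempty
    · exact absurd ⟨Y, S, Z, hsep, hS, hRY, hRZ⟩ hins.2
    · exact hkey Y Z hsep hZ (Set.not_nonempty_iff_eq_empty.1 hRZ)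
  · exact hkey Z Y hsep.flip hY (Set.not_nonempty_iff_eq_empty.1 hRY)

/-- Statement A: components outside a triconnected region have at most 2 neighbours. -/
lemma attach_le_two {R : Set V} (hreg : TriconnectedRegion G R) :
    ∀ C : Set V, IsCompOutside G R C → (Nbhd G C).ncard ≤ 2 := by
  intro C hC
  obtain ⟨hins, hcard4, hmax⟩ := hreg
  have hcov : ∀ v ∈ C, ∃ D, D ⊆ C ∧ v ∈ D ∧
      (∀ a ∈ D, ∀ b ∈ D, WalkIn G D a b) ∧ (Nbhd G D \ (∅ : Set V)).ncard ≤ 2 := by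
    intro v hv
    have hss : R ⊂ R ∪ {v} := by
      refine ⟨Set.subset_union_left, fun hsub => (hC.1 hv) (hsub (Or.inr rfl))⟩
    obtain ⟨D, h1, h2, h3, h4⟩ := exists_blob hins hC hv hcard4 (hmax _ hss)
    exact ⟨D, h1, h2, h3, by simpa using h4⟩
  have := star_lemma G C.ncard C ∅ le_rfl hC.nonempty (by simp) hC.walkIn hcov
  simpa using this

/-- Statement B: the torso of a 2-inseparable set with ≥ 4 vertices is 3-connected. -/
lemma torso_threeconn {R : Set V} (hins : KInseparable G 2 R) (hcard4 : 4 ≤ R.ncard) :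
    KConnected 3 (torso G R) := by
  constructor
  · rw [Nat.card_coe_set_eq]; omega
  · intro Y₀ S₀ Z₀ hsep hY hZ
    by_contra hlt
    push_neg at hlt
    set vY : Set V := Subtype.val '' Y₀ with hvY
    set vS : Set V := Subtype.val '' S₀ with hvS
    set vZ : Set V := Subtype.val '' Z₀ with hvZ
    set OC : V → Prop := fun v => (Nbhd G (gComp G R v) ∩ vY).Nonempty with hOC
    set Y' : Set V := vY ∪ {v | v ∉ R ∧ OC v} with hY'
    set Z' : Set V := vZ ∪ {v | v ∉ R ∧ ¬ OC v} with hZ'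
    have hvYR : vY ⊆ R := by rintro x ⟨r, _, rfl⟩; exact r.2
    have hvSR : vS ⊆ R := by rintro x ⟨r, _, rfl⟩; exact r.2
    have hvZR : vZ ⊆ R := by rintro x ⟨r, _, rfl⟩; exact r.2
    have hdisjYS : ∀ x, x ∈ vY → x ∈ vS → False := by
      rintro x ⟨r, hr, rfl⟩ ⟨r', hr', hrr⟩
      rw [Subtype.val_injective hrr] at hr'
      exact hsep.1.ne_of_mem hr hr' rfl
    have hdisjYZ : ∀ x, x ∈ vY → x ∈ vZ → False := by
      rintro x ⟨r, hr, rfl⟩ ⟨r', hr', hrr⟩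
      rw [Subtype.val_injective hrr] at hr'
      exact hsep.2.1.ne_of_mem hr hr' rfl
    have hdisjSZ : ∀ x, x ∈ vS → x ∈ vZ → False := by
      rintro x ⟨r, hr, rfl⟩ ⟨r', hr', hrr⟩
      rw [Subtype.val_injective hrr] at hr'
      exact hsep.2.2.1.ne_of_mem hr hr' rfl
    apply hins.2
    refine ⟨Y', vS, Z', ⟨?_, ?_, ?_, ?_, ?_⟩, ?_, ?_, ?_⟩
    · rw [Set.disjoint_left]
      rintro x (hx | hx)
      · exact fun h => hdisjYS x hx h
      · exact fun h => hx.1 (hvSR h)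
    · rw [Set.disjoint_left]
      rintro x (hx | hx)
      · rintro (h | h)
        · exact hdisjYZ x hx h
        · exact h.1 (hvYR hx)
      · rintro (h | h)
        · exact hx.1 (hvZR h)
        · exact h.2 hx.2
    · rw [Set.disjoint_left]
      rintro x hx
      rintro (h | h)
      · exact hdisjSZ x hx h
      · exact h.1 (hvSR hx)
    · ext x
      simp only [Set.mem_union, Set.mem_univ, iff_true]
      by_cases hxR : x ∈ R
      · rcases hsep.mem_tri ⟨x, hxR⟩ with h | h | h
        · exact Or.inl (Or.inl (Or.inl ⟨⟨x, hxR⟩, h, rfl⟩))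
        · exact Or.inl (Or.inr ⟨⟨x, hxR⟩, h, rfl⟩)
        · exact Or.inr (Or.inl ⟨⟨x, hxR⟩, h, rfl⟩)
      · by_cases hoc : OC x
        · exact Or.inl (Or.inl (Or.inr ⟨hxR, hoc⟩))
        · exact Or.inr (Or.inr ⟨hxR, hoc⟩)
    · -- edge condition
      rintro y (hy | hy) z (hz | hz) hadj
      · obtain ⟨r1, hr1, rfl⟩ := hy
        obtain ⟨r2, hr2, rfl⟩ := hz
        have hne : r1 ≠ r2 := fun h => hsep.2.1.ne_of_mem hr1 (h ▸ hr2) rfl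
        exact hsep.2.2.2.2 r1 hr1 r2 hr2 ⟨hne, Or.inl hadj⟩
      · obtain ⟨r1, hr1, rfl⟩ := hy
        apply hz.2
        refine ⟨(r1 : V), ⟨?_, z, gComp_self hz.1, hadj.symm⟩, ⟨r1, hr1, rfl⟩⟩
        exact fun h => (gComp_subset_compl h) r1.2
      · obtain ⟨r2, hr2, rfl⟩ := hz
        obtain ⟨x, ⟨hx1, u, hu, hadj'⟩, r1, hr1, rfl⟩ := hy.2
        have hne : r1 ≠ r2 := fun h => hsep.2.1.ne_of_mem hr1 (h ▸ hr2) rfl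
        refine hsep.2.2.2.2 r1 hr1 r2 hr2 ⟨hne, Or.inr ⟨gComp G R y, isCompOutside_gComp hy.1, ⟨hx1, u, hu, hadj'⟩, ?_⟩⟩
        exact ⟨fun h => (gComp_subset_compl h) r2.2, y, gComp_self hy.1, hadj⟩
      · have hzy : z ∈ gComp G R y := gComp_closed (gComp_self hy.1) hadj hz.1
        have : gComp G R z = gComp G R y := gComp_eq_of_mem hzy
        refine hz.2 ?_
        change (Nbhd G (gComp G R z) ∩ vY).Nonempty
        rw [this]; exact hy.2
    · rw [hvS, Set.ncard_image_of_injective _ Subtype.val_injective]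
      omega
    · obtain ⟨r, hr⟩ := hY
      exact ⟨(r : V), r.2, Or.inl ⟨r, hr, rfl⟩⟩
    · obtain ⟨r, hr⟩ := hZ
      exact ⟨(r : V), r.2, Or.inl ⟨r, hr, rfl⟩⟩

/-- Backward maximality. -/
lemma maximal_of_rhs {R : Set V}
    (hA : ∀ C : Set V, IsCompOutside G R C → (Nbhd G C).ncard ≤ 2)
    (hcard4 : 4 ≤ R.ncard) : ∀ R' : Set V, R ⊂ R' → ¬ KInseparable G 2 R' := by
  intro R' hRR' hins
  have hRsub := hRR'.1
  obtain ⟨x, hxR', hxR⟩ := Set.exists_of_ssubset hRR'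
  set C := gComp G R x with hCdef
  have hCcomp : IsCompOutside G R C := isCompOutside_gComp hxR
  have hN2 := hA C hCcomp
  apply hins.2
  refine ⟨C, Nbhd G C, (C ∪ Nbhd G C)ᶜ, ⟨?_, ?_, ?_, ?_, ?_⟩, hN2,
    ⟨x, hxR', gComp_self hxR⟩, ?_⟩
  · rw [Set.disjoint_left]; exact fun a ha h => h.1 ha
  · rw [Set.disjoint_left]; exact fun a ha h => h (Or.inl ha)
  · rw [Set.disjoint_left]; exact fun a ha h => h (Or.inr ha)
  · rw [Set.union_compl_self]  -- needs assoc
  · intro y hy z hz hadj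
    exact hz (Or.inr ⟨fun h => hz (Or.inl h), y, hy, hadj⟩)
  · have hnsub : ¬ (R ⊆ Nbhd G C) := by
      intro h
      have := Set.ncard_le_ncard h (Set.toFinite _)
      omega
    obtain ⟨r, hrR, hrN⟩ := Set.not_subset.1 hnsub
    refine ⟨r, hRsub hrR, ?_⟩
    rintro (h | h)
    · exact (hCcomp.1 h) hrR
    · exact hrN h

end Aux4
section Aux5

open SimpleGraph

variable {V : Type*} [Fintype V] {G : SimpleGraph V} {R : Set V}

/-- In a 3-connected torso, no vertex has degree ≤ 2 with a non-neighbour present. -/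
lemma torso_min_degree (h3 : KConnected 3 (torso G R)) (a b : ↥R)
    (hN : {x | (torso G R).Adj a x}.ncard ≤ 2) (hb : b ≠ a)
    (hbN : ¬ (torso G R).Adj a b) : False := by
  set N := {x | (torso G R).Adj a x} with hNdef
  have hsep : IsSeparation (torso G R) {a} N (Set.univ \ ({a} ∪ N)) := by
    refine ⟨?_, ?_, ?_, ?_, ?_⟩
    · rw [Set.disjoint_left]
      intro x hx hx'
      rw [Set.mem_singleton_iff] at hx
      subst hx
      exact (torso G R).loopless.irrefl _ hx'
    · rw [Set.disjoint_left]
      intro x hx hx'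
      rw [Set.mem_singleton_iff] at hx
      exact hx'.2 (Or.inl hx)
    · rw [Set.disjoint_left]
      intro x hx hx'
      exact hx'.2 (Or.inr hx)
    · ext x
      simp only [Set.mem_union, Set.mem_diff, Set.mem_univ, true_and, Set.mem_singleton_iff,
        iff_true]
      tauto
    · rintro y hy z hz hadj
      rw [Set.mem_singleton_iff] at hy
      subst hy
      exact hz.2 (Or.inr hadj)
  have hbmem : b ∈ Set.univ \ ({a} ∪ N) := by
    refine ⟨trivial, ?_⟩
    rintro (h | h)
    · exact hb h
    · exact hbN h
  have h2 := h3.2 _ _ _ hsep ⟨a, rfl⟩ ⟨b, hbmem⟩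
  omega

/-- A torso edge crossing a separation of `G` comes from a component meeting `S \ R`. -/
lemma crossing_comp {Y S Z : Set V} (hsep : IsSeparation G Y S Z)
    (hA : ∀ C : Set V, IsCompOutside G R C → (Nbhd G C).ncard ≤ 2)
    {r1 r2 : ↥R} (h1 : ↑r1 ∈ Y) (h2 : ↑r2 ∈ Z) (hadj : (torso G R).Adj r1 r2) :
    ∃ s, s ∈ S ∧ s ∉ R ∧ Nbhd G (gComp G R s) = {↑r1, ↑r2} := by
  obtain ⟨hne, hGadj | ⟨C, hC, hu, hv⟩⟩ := hadj
  · exact absurd hGadj (hsep.2.2.2.2 _ h1 _ h2)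
  · have hne' : (r1 : V) ≠ (r2 : V) := fun h => hne (Subtype.ext h)
    have hNC : Nbhd G C = {(r1 : V), (r2 : V)} := by
      refine (Set.eq_of_subset_of_ncard_le ?_ ?_ (Set.toFinite _)).symm
      · rintro x (rfl | rfl)
        exacts [hu, hv]
      · rw [Set.ncard_pair hne']
        exact hA C hC
    obtain ⟨hu1, u, huC, huadj⟩ := hu
    obtain ⟨hv1, t, htC, htadj⟩ := hv
    have hfin : ∀ s ∈ C, s ∈ S → ∃ s', s' ∈ S ∧ s' ∉ R ∧
        Nbhd G (gComp G R s') = {(r1 : V), (r2 : V)} := by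
      intro s hsC hsS
      refine ⟨s, hsS, fun h => (hC.1 hsC) h, ?_⟩
      rw [← hC.eq_gComp hsC, hNC]
    have huY : u ∈ Y ∨ u ∈ S := by
      rcases hsep.mem_tri u with h | h | h
      · exact Or.inl h
      · exact Or.inr h
      · exact absurd huadj.symm (hsep.2.2.2.2 _ h1 _ h)
    have htZ : t ∈ Z ∨ t ∈ S := by
      rcases hsep.mem_tri t with h | h | h
      · exact absurd htadj (hsep.2.2.2.2 _ h _ h2)
      · exact Or.inr h
      · exact Or.inl h
    rcases huY with huY | huS
    · rcases htZ with htZ | htS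
      · obtain ⟨w, hw⟩ := hC.walkIn u huC t htC
        by_cases hSsup : ∃ x ∈ w.support, x ∈ S
        · obtain ⟨x, hx1, hx2⟩ := hSsup
          exact hfin x (hw x hx1) hx2
        · push_neg at hSsup
          have hwalk : WalkIn G Sᶜ u t := ⟨w, fun x hx => hSsup x hx⟩
          have htY : t ∈ Y := hsep.flip.gComp_subset huY hwalk
          exact absurd rfl (hsep.2.1.ne_of_mem htY htZ)
      · exact hfin t htC htS
    · exact hfin u huC huS

/-- Backward direction: `R` is 2-inseparable. -/
lemma twoinsep_of_rhs (h3 : KConnected 3 (torso G R))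
    (hA : ∀ C : Set V, IsCompOutside G R C → (Nbhd G C).ncard ≤ 2) :
    KInseparable G 2 R := by
  classical
  have hcard4 : 4 ≤ R.ncard := by
    have := h3.1
    rw [Nat.card_coe_set_eq] at this
    omega
  refine ⟨by omega, ?_⟩
  rintro ⟨Y, S, Z, hsep, hS, hRY, hRZ⟩
  have hYZ : ∀ x, x ∈ Y → x ∈ Z → False := fun x hx hx' => hsep.2.1.ne_of_mem hx hx' rfl
  set RY : Set ↥R := {r | ↑r ∈ Y} with hRYdef
  set RS : Set ↥R := {r | ↑r ∈ S} with hRSdef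
  set RZ : Set ↥R := {r | ↑r ∈ Z} with hRZdef
  set KY : Set ↥R := {r | ↑r ∈ Y ∧ ∃ r' : ↥R, ↑r' ∈ Z ∧ (torso G R).Adj r r'} with hKYdef
  set KZ : Set ↥R := {r | ↑r ∈ Z ∧ ∃ r' : ↥R, ↑r' ∈ Y ∧ (torso G R).Adj r r'} with hKZdef
  have hmapY : ∀ r ∈ KY, ∃ s, (s ∈ S ∧ s ∉ R) ∧ ∃ rz : ↥R, ↑rz ∈ Z ∧
      Nbhd G (gComp G R s) = {(r : V), (rz : V)} := by
    rintro r ⟨hrY, r', hr', hadj⟩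
    obtain ⟨s, hs1, hs2, hs3⟩ := crossing_comp hsep hA hrY hr' hadj
    exact ⟨s, ⟨hs1, hs2⟩, r', hr', hs3⟩
  have hmapZ : ∀ r ∈ KZ, ∃ s, (s ∈ S ∧ s ∉ R) ∧ ∃ ry : ↥R, ↑ry ∈ Y ∧
      Nbhd G (gComp G R s) = {(ry : V), (r : V)} := by
    rintro r ⟨hrZ, r', hr', hadj⟩
    obtain ⟨s, hs1, hs2, hs3⟩ := crossing_comp hsep hA hr' hrZ hadj.symm
    exact ⟨s, ⟨hs1, hs2⟩, r', hr', hs3⟩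
  -- injections into S \ R
  have hKYcard : KY.ncard ≤ (S \ R).ncard := by
    refine Set.ncard_le_ncard_of_injOn
      (fun r => if h : r ∈ KY then (hmapY r h).choose else ↑r) ?_ ?_ (Set.toFinite _)
    · intro r hr
      simp only [dif_pos hr]
      exact ⟨((hmapY r hr).choose_spec).1.1, ((hmapY r hr).choose_spec).1.2⟩
    · intro r1 h1' r2 h2' heq
      simp only [dif_pos h1', dif_pos h2'] at heq
      obtain ⟨_, rz1, hz1, hN1⟩ := (hmapY r1 h1').choose_spec
      obtain ⟨_, rz2, hz2, hN2⟩ := (hmapY r2 h2').choose_spec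
      rw [heq, hN2] at hN1
      have hmem : (r2 : V) ∈ ({(r1 : V), (rz1 : V)} : Set V) := by rw [← hN1]; simp
      rcases hmem with h | h
      · exact (Subtype.ext h).symm
      · exact ((hYZ _ h2'.1 (by rw [h]; exact hz1))).elim
  have hKZcard : KZ.ncard ≤ (S \ R).ncard := by
    refine Set.ncard_le_ncard_of_injOn
      (fun r => if h : r ∈ KZ then (hmapZ r h).choose else ↑r) ?_ ?_ (Set.toFinite _)
    · intro r hr
      simp only [dif_pos hr]
      exact ⟨((hmapZ r hr).choose_spec).1.1, ((hmapZ r hr).choose_spec).1.2⟩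
    · intro r1 h1' r2 h2' heq
      simp only [dif_pos h1', dif_pos h2'] at heq
      obtain ⟨_, ry1, hy1, hN1⟩ := (hmapZ r1 h1').choose_spec
      obtain ⟨_, ry2, hy2, hN2⟩ := (hmapZ r2 h2').choose_spec
      rw [heq, hN2] at hN1
      have hmem : (r2 : V) ∈ ({(ry1 : V), (r1 : V)} : Set V) := by rw [← hN1]; simp
      rcases hmem with h | h
      · exact ((hYZ _ hy1 (by rw [← h]; exact h2'.1))).elim
      · exact (Subtype.ext h).symm
  -- cardinal of S split
  have hSsplit : (S ∩ R).ncard + (S \ R).ncard = S.ncard :=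
    Set.ncard_inter_add_ncard_diff_eq_ncard S R
  have hRScard : RS.ncard = (S ∩ R).ncard := by
    rw [← Set.ncard_image_of_injective RS Subtype.val_injective]
    congr 1
    ext x
    constructor
    · rintro ⟨r, hr, rfl⟩; exact ⟨hr, r.2⟩
    · rintro ⟨hx1, hx2⟩; exact ⟨⟨x, hx2⟩, hx1, rfl⟩
  obtain ⟨y0, hy0R, hy0Y⟩ := hRY
  obtain ⟨z0, hz0R, hz0Z⟩ := hRZ
  have hRYKY : RY ⊆ KY := by
    by_contra hcon
    obtain ⟨a, haRY, haKY⟩ := Set.not_subset.1 hcon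
    have hsep1 : IsSeparation (torso G R) (RY \ KY) (RS ∪ KY) RZ := by
      refine ⟨?_, ?_, ?_, ?_, ?_⟩
      · rw [Set.disjoint_left]
        rintro x ⟨hx1, hx2⟩ (h | h)
        · exact hsep.1.ne_of_mem hx1 h rfl
        · exact hx2 h
      · rw [Set.disjoint_left]
        rintro x ⟨hx1, _⟩ h
        exact hYZ _ hx1 h
      · rw [Set.disjoint_left]
        rintro x (h | h) hz
        · exact hsep.2.2.1.ne_of_mem h hz rfl
        · exact hYZ _ h.1 hz
      · ext r
        simp only [Set.mem_union, Set.mem_univ, iff_true, Set.mem_diff]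
        rcases hsep.mem_tri (r : V) with h | h | h
        · by_cases hk : r ∈ KY
          · exact Or.inl (Or.inr (Or.inr hk))
          · exact Or.inl (Or.inl ⟨h, hk⟩)
        · exact Or.inl (Or.inr (Or.inl h))
        · exact Or.inr h
      · rintro u ⟨hu1, hu2⟩ z hz hadj
        exact hu2 ⟨hu1, z, hz, hadj⟩
    have h2 := h3.2 _ _ _ hsep1 ⟨a, haRY, haKY⟩ ⟨⟨z0, hz0R⟩, hz0Z⟩
    have hle := Set.ncard_union_le RS KY
    omega
  have hRZKZ : RZ ⊆ KZ := by
    by_contra hcon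
    obtain ⟨a, haRZ, haKZ⟩ := Set.not_subset.1 hcon
    have hsep2 : IsSeparation (torso G R) RY (RS ∪ KZ) (RZ \ KZ) := by
      refine ⟨?_, ?_, ?_, ?_, ?_⟩
      · rw [Set.disjoint_left]
        rintro x hx (h | h)
        · exact hsep.1.ne_of_mem hx h rfl
        · exact hYZ _ hx h.1
      · rw [Set.disjoint_left]
        rintro x hx ⟨h, _⟩
        exact hYZ _ hx h
      · rw [Set.disjoint_left]
        rintro x (h | h) ⟨hz, hk⟩
        · exact hsep.2.2.1.ne_of_mem h hz rfl
        · exact hk h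
      · ext r
        simp only [Set.mem_union, Set.mem_univ, iff_true, Set.mem_diff]
        rcases hsep.mem_tri (r : V) with h | h | h
        · exact Or.inl (Or.inl h)
        · exact Or.inl (Or.inr (Or.inl h))
        · by_cases hk : r ∈ KZ
          · exact Or.inl (Or.inr (Or.inr hk))
          · exact Or.inr ⟨h, hk⟩
      · rintro u hu z ⟨hz1, hz2⟩ hadj
        exact hz2 ⟨hz1, u, hu, hadj.symm⟩
    have h2 := h3.2 _ _ _ hsep2 ⟨⟨y0, hy0R⟩, hy0Y⟩ ⟨a, haRZ, haKZ⟩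
    have hle := Set.ncard_union_le RS KZ
    omega
  -- counting
  have hpart : (Set.univ : Set ↥R) = RY ∪ RS ∪ RZ := by
    ext r
    simp only [Set.mem_univ, true_iff, Set.mem_union]
    rcases hsep.mem_tri (r : V) with h | h | h
    · exact Or.inl (Or.inl h)
    · exact Or.inl (Or.inr h)
    · exact Or.inr h
  have hdisj1 : Disjoint RY RS := by
    rw [Set.disjoint_left]; exact fun r h h' => hsep.1.ne_of_mem h h' rfl
  have hdisj2 : Disjoint (RY ∪ RS) RZ := by
    rw [Set.disjoint_left]
    rintro r (h | h) h'
    · exact hYZ _ h h'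
    · exact hsep.2.2.1.ne_of_mem h h' rfl
  have hcount : RY.ncard + RS.ncard + RZ.ncard = Nat.card ↥R := by
    rw [← Set.ncard_univ, hpart, Set.ncard_union_eq hdisj2, Set.ncard_union_eq hdisj1]
  have hRYle : RY.ncard ≤ (S \ R).ncard := le_trans (Set.ncard_le_ncard hRYKY) hKYcard
  have hRZle : RZ.ncard ≤ (S \ R).ncard := le_trans (Set.ncard_le_ncard hRZKZ) hKZcard
  have hR4 : 4 ≤ Nat.card ↥R := h3.1
  have hSO2 : (S \ R).ncard = 2 ∧ RY.ncard = 2 ∧ RZ.ncard = 2 ∧ RS.ncard = 0 := by omega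
  obtain ⟨hSO, hRY2, hRZ2, hRS0⟩ := hSO2
  have hRSempty : RS = ∅ := by
    rw [← Set.ncard_eq_zero (Set.toFinite RS)]; exact hRS0
  obtain ⟨a1, a2, ha12, hRYeq⟩ := Set.ncard_eq_two.1 hRY2
  have ha1RY : a1 ∈ RY := by rw [hRYeq]; exact Or.inl rfl
  have ha2RY : a2 ∈ RY := by rw [hRYeq]; exact Or.inr rfl
  obtain ⟨s1, ⟨hs1S, hs1R⟩, pb1, hpb1Z, hNs1⟩ := hmapY a1 (hRYKY ha1RY)
  obtain ⟨s2, ⟨hs2S, hs2R⟩, pb2, hpb2Z, hNs2⟩ := hmapY a2 (hRYKY ha2RY)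
  have ha1Y : (a1 : V) ∈ Y := ha1RY
  have ha2Y : (a2 : V) ∈ Y := ha2RY
  have hs12 : s1 ≠ s2 := by
    intro h
    rw [h, hNs2] at hNs1
    have hmem : (a1 : V) ∈ ({(a2 : V), (pb2 : V)} : Set V) := by rw [hNs1]; simp
    rcases hmem with hh | hh
    · exact ha12 (Subtype.ext hh)
    · exact hYZ _ ha1Y (by rw [hh]; exact hpb2Z)
  have hSRset : S \ R = {s1, s2} := by
    refine (Set.eq_of_subset_of_ncard_le ?_ ?_ (Set.toFinite _)).symm
    · rintro x (rfl | rfl)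
      exacts [⟨hs1S, hs1R⟩, ⟨hs2S, hs2R⟩]
    · rw [Set.ncard_pair hs12]; omega
  -- torso neighbours of a1 are contained in {a2, pb1}
  have hNa1 : {x : ↥R | (torso G R).Adj a1 x} ⊆ {a2, pb1} := by
    intro x hx
    rcases hsep.mem_tri (x : V) with h | h | h
    · have hxRY : x ∈ RY := h
      rw [hRYeq] at hxRY
      rcases hxRY with rfl | rfl
      · exact absurd hx ((torso G R).loopless.irrefl _)
      · exact Or.inl rfl
    · exfalso
      have hx' : x ∈ RS := h
      rw [hRSempty] at hx'
      exact hx'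
    · obtain ⟨s, hsS, hsR, hNs⟩ := crossing_comp hsep hA ha1Y h hx
      have hsmem : s ∈ ({s1, s2} : Set V) := by
        rw [← hSRset]; exact ⟨hsS, hsR⟩
      rcases hsmem with rfl | rfl
      · rw [hNs1] at hNs
        have hmem : (x : V) ∈ ({(a1 : V), (pb1 : V)} : Set V) := by rw [hNs]; simp
        rcases hmem with hh | hh
        · exact ((hYZ _ (by rw [hh]; exact ha1Y) h)).elim
        · exact Or.inr (Subtype.ext hh)
      · rw [hNs2] at hNs
        have hmem : (a1 : V) ∈ ({(a2 : V), (pb2 : V)} : Set V) := by rw [hNs]; simp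
        rcases hmem with hh | hh
        · exact absurd (Subtype.ext hh) ha12
        · exact ((hYZ _ ha1Y (by rw [hh]; exact hpb2Z))).elim
  have hpb1RZ : pb1 ∈ RZ := hpb1Z
  obtain ⟨b1, b2, hb12, hRZeq⟩ := Set.ncard_eq_two.1 hRZ2
  have hfinal : ∀ bb : ↥R, bb ∈ RZ → bb ≠ pb1 → False := by
    intro bb hbbZ hbbne
    have hbZ : (bb : V) ∈ Z := hbbZ
    have hbna1 : bb ≠ a1 := by
      intro h
      exact hYZ _ ha1Y (by rw [← h]; exact hbZ)
    have hbnadj : ¬ (torso G R).Adj a1 bb := by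
      intro h
      rcases hNa1 h with h' | h'
      · subst h'
        exact hYZ _ ha2Y hbZ
      · exact hbbne h'
    refine torso_min_degree h3 a1 bb ?_ hbna1 hbnadj
    refine le_trans (Set.ncard_le_ncard hNa1) ?_
    by_cases h : a2 = pb1
    · simp [h]
    · rw [Set.ncard_pair h]
  have hpbcase : pb1 = b1 ∨ pb1 = b2 := by
    have : pb1 ∈ ({b1, b2} : Set ↥R) := by rw [← hRZeq]; exact hpb1RZ
    exact this
  rcases hpbcase with h | h
  · refine hfinal b2 (by rw [hRZeq]; exact Or.inr rfl) ?_
    intro hh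
    rw [h] at hh
    exact hb12 hh.symm
  · refine hfinal b1 (by rw [hRZeq]; exact Or.inl rfl) ?_
    intro hh
    rw [h] at hh
    exact hb12 hh

end Aux5
section Aux6

open SimpleGraph

variable {V : Type*} [Fintype V] {G : SimpleGraph V} {R : Set V}

lemma exists_good_walk (hA : ∀ C : Set V, IsCompOutside G R C → (Nbhd G C).ncard ≤ 2)
    (u v : ↥R) (h : (torso G R).Adj u v) :
    ∃ w : G.Walk ↑u ↑v, w.IsPath ∧
      ((G.Adj ↑u ↑v ∧ ∀ x ∈ w.support, x ∈ ({(u : V), (v : V)} : Set V)) ∨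
       (∃ C, IsCompOutside G R C ∧ Nbhd G C = {(u : V), (v : V)} ∧
         ∀ x ∈ w.support, x ∈ ({(u : V), (v : V)} : Set V) ∪ C)) := by
  classical
  have hne : (u : V) ≠ (v : V) := fun hh => h.1 (Subtype.ext hh)
  by_cases hG : G.Adj ↑u ↑v
  · refine ⟨hG.toWalk, ?_, Or.inl ⟨hG, ?_⟩⟩
    · simp [SimpleGraph.Adj.toWalk, SimpleGraph.Walk.isPath_def, hne]
    · intro x hx
      simp [SimpleGraph.Adj.toWalk] at hx
      rcases hx with rfl | rfl
      · exact Or.inl rfl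
      · exact Or.inr rfl
  · obtain ⟨C, hC, hu', hv'⟩ := h.2.resolve_left hG
    have hNC : Nbhd G C = {(u : V), (v : V)} := by
      refine (Set.eq_of_subset_of_ncard_le ?_ ?_ (Set.toFinite _)).symm
      · rintro x (rfl | rfl)
        exacts [hu', hv']
      · rw [Set.ncard_pair hne]
        exact hA C hC
    obtain ⟨hu1, cu, hcu, hcuadj⟩ := hu'
    obtain ⟨hv1, cv, hcv, hcvadj⟩ := hv'
    obtain ⟨w0, hw0⟩ := hC.walkIn cu hcu cv hcv
    set w1 : G.Walk ↑u ↑v :=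
      SimpleGraph.Walk.cons hcuadj.symm (w0.append (SimpleGraph.Walk.cons hcvadj SimpleGraph.Walk.nil)) with hw1
    refine ⟨w1.bypass, SimpleGraph.Walk.bypass_isPath w1, Or.inr ⟨C, hC, hNC, ?_⟩⟩
    intro x hx
    have hx1 := SimpleGraph.Walk.support_bypass_subset w1 hx
    rw [hw1] at hx1
    rw [SimpleGraph.Walk.support_cons, List.mem_cons] at hx1
    rcases hx1 with rfl | hx1
    · exact Or.inl (Or.inl rfl)
    · rw [SimpleGraph.Walk.mem_support_append_iff] at hx1
      rcases hx1 with hx1 | hx1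
      · exact Or.inr (hw0 x hx1)
      · simp at hx1
        rcases hx1 with rfl | rfl
        · exact Or.inr hcv
        · exact Or.inl (Or.inr rfl)

lemma topological_of (hA : ∀ C : Set V, IsCompOutside G R C → (Nbhd G C).ncard ≤ 2) :
    IsTopologicalSubgraph (torso G R) G := by
  classical
  choose W hWpath hWsupp using exists_good_walk hA
  set ord : V → ℕ := fun x => ((Fintype.equivFin V) x : ℕ) with hord
  have hordinj : Function.Injective ord := by
    intro a b hab
    exact (Fintype.equivFin V).injective (Fin.ext hab)
  set P : ∀ u v : ↥R, (torso G R).Adj u v → G.Walk ↑u ↑v :=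
    fun u v h => if ord ↑u < ord ↑v then W u v h else (W v u h.symm).reverse with hP
  have hordtri : ∀ u v : ↥R, (torso G R).Adj u v → ¬ ord ↑u < ord ↑v → ord ↑v < ord ↑u := by
    intro u v h hlt
    rcases Nat.lt_trichotomy (ord ↑u) (ord ↑v) with h' | h' | h'
    · exact absurd h' hlt
    · exact absurd (Subtype.ext (hordinj h')) h.1
    · exact h'
  -- uniform support bound
  have hPsupp : ∀ u v (h : (torso G R).Adj u v),
      (∀ x ∈ (P u v h).support, x ∈ ({(u : V), (v : V)} : Set V)) ∨
      (∃ C, IsCompOutside G R C ∧ Nbhd G C = {(u : V), (v : V)} ∧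
        ∀ x ∈ (P u v h).support, x ∈ ({(u : V), (v : V)} : Set V) ∪ C) := by
    intro u v h
    rw [hP]
    by_cases hlt : ord ↑u < ord ↑v
    · simp only [if_pos hlt]
      rcases hWsupp u v h with ⟨_, hs⟩ | ⟨C, h1, h2, h3⟩
      · exact Or.inl hs
      · exact Or.inr ⟨C, h1, h2, h3⟩
    · simp only [if_neg hlt]
      have hpair : ({(v : V), (u : V)} : Set V) = {(u : V), (v : V)} := Set.pair_comm _ _
      rcases hWsupp v u h.symm with ⟨_, hs⟩ | ⟨C, h1, h2, h3⟩
      · refine Or.inl ?_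
        intro x hx
        rw [SimpleGraph.Walk.support_reverse, List.mem_reverse] at hx
        exact hpair ▸ hs x hx
      · refine Or.inr ⟨C, h1, hpair ▸ h2, ?_⟩
        intro x hx
        rw [SimpleGraph.Walk.support_reverse, List.mem_reverse] at hx
        exact hpair ▸ h3 x hx
  refine ⟨Subtype.val, P, Subtype.val_injective, ?_, ?_, ?_, ?_⟩
  · intro u v h
    rw [hP]
    by_cases hlt : ord ↑u < ord ↑v
    · simpa only [if_pos hlt] using hWpath u v h
    · simpa only [if_neg hlt] using (hWpath v u h.symm).reverse
  · intro u v h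
    rw [hP]
    by_cases hlt : ord ↑u < ord ↑v
    · have hlt' : ¬ ord ↑v < ord ↑u := by omega
      simp only [if_pos hlt, if_neg hlt', SimpleGraph.Walk.reverse_reverse]
    · have hlt' : ord ↑v < ord ↑u := hordtri u v h hlt
      simp only [if_neg hlt, if_pos hlt']
  · intro u v h x hx hxrange
    rcases hPsupp u v h with hs | ⟨C, hC, _, hs⟩
    · rcases hs x hx with h' | h'
      · exact Or.inl h'
      · exact Or.inr h'
    · rcases hs x hx with (h' | h') | h'
      · exact Or.inl h'
      · exact Or.inr h'
      · exfalso
        rw [Subtype.range_coe] at hxrange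
        exact (hC.1 h') hxrange
  · intro u v h u' v' h' hne x hx hx'
    have hval : ∀ (a b : ↥R) (y : V), y ∈ ({(a : V), (b : V)} : Set V) →
        y = ↑a ∨ y = ↑b := by
      rintro a b y (rfl | rfl)
      · exact Or.inl rfl
      · exact Or.inr rfl
    rcases hPsupp u v h with hs | ⟨C, hC, hNC, hs⟩ <;>
      rcases hPsupp u' v' h' with hs' | ⟨C', hC', hNC', hs'⟩
    · exact ⟨hval u v x (hs x hx), hval u' v' x (hs' x hx')⟩
    · have h1 := hs x hx
      have h2 : x ∈ ({(u' : V), (v' : V)} : Set V) := by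
        rcases hs' x hx' with h2 | h2
        · exact h2
        · exfalso
          rcases h1 with rfl | rfl
          · exact (hC'.1 h2) u.2
          · exact (hC'.1 h2) v.2
      exact ⟨hval u v x h1, hval u' v' x h2⟩
    · have h1 := hs' x hx'
      have h2 : x ∈ ({(u : V), (v : V)} : Set V) := by
        rcases hs x hx with h2 | h2
        · exact h2
        · exfalso
          rcases h1 with rfl | rfl
          · exact (hC.1 h2) u'.2
          · exact (hC.1 h2) v'.2
      exact ⟨hval u v x h2, hval u' v' x h1⟩
    · by_cases hCC : C = C'
      · exfalso
        rw [hCC, hNC'] at hNC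
        rw [Set.pair_eq_pair_iff] at hNC
        apply hne
        rw [Sym2.eq_iff]
        rcases hNC with ⟨ha, hb⟩ | ⟨ha, hb⟩
        · exact Or.inl ⟨Subtype.ext ha.symm, Subtype.ext hb.symm⟩
        · exact Or.inr ⟨Subtype.ext hb.symm, Subtype.ext ha.symm⟩
      · have hdisj : C ∩ C' = ∅ := by
          by_contra hcon
          exact hCC (hC.eq_or_disjoint hC' (Set.nonempty_iff_ne_empty.2 hcon))
        have h1 : x ∈ ({(u : V), (v : V)} : Set V) := by
          rcases hs x hx with h1 | h1
          · exact h1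
          · exfalso
            rcases hs' x hx' with h2 | h2
            · rcases h2 with rfl | rfl
              · exact (hC.1 h1) u'.2
              · exact (hC.1 h1) v'.2
            · exact Set.eq_empty_iff_forall_notMem.1 hdisj x ⟨h1, h2⟩
        have h2 : x ∈ ({(u' : V), (v' : V)} : Set V) := by
          rcases hs' x hx' with h2 | h2
          · exact h2
          · exfalso
            rcases h1 with rfl | rfl
            · exact (hC'.1 h2) u.2
            · exact (hC'.1 h2) v.2
        exact ⟨hval u v x h1, hval u' v' x h2⟩

end Aux6

/-- R is a triconnected region iff the torso G⟦R⟧ is 3-connected, a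
topological subgraph of G, and every component of G − R has at most 2 neighbours. -/
theorem statement7 {V : Type*} [Fintype V] (G : SimpleGraph V) (R : Set V) :
    TriconnectedRegion G R ↔
      (KConnected 3 (torso G R) ∧ IsTopologicalSubgraph (torso G R) G ∧
        ∀ C : Set V, IsCompOutside G R C → (Nbhd G C).ncard ≤ 2) := by
  constructor
  · intro hreg
    have hA := attach_le_two hreg
    exact ⟨torso_threeconn hreg.1 hreg.2.1, topological_of hA, hA⟩
  · rintro ⟨h3, htop, hA⟩
    have hins := twoinsep_of_rhs h3 hA
    have hcard4 : 4 ≤ R.ncard := by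
      have := h3.1
      rw [Nat.card_coe_set_eq] at this
      omega
    exact ⟨hins, hcard4, maximal_of_rhs hA hcard4⟩
end

section
/- Let G be a finite simple graph, R a triconnected region of G, and 𝒯 a G-tangle of order 4 such that {(Y,S,Z) ∈ 𝒯 : |S| < 3} = {(Y,S,Z) : (Y,S,Z) is a separation of G of order < 3 with R ⊆ S ∪ Z}. Then the set of all separations (Y',S',Z') of the torso G⟦R⟧ of order < 4 for which there exists (Y,S,Z) ∈ 𝒯 with Y' = Y ∩ R, S' = S ∩ R and Z' = Z ∩ R is a G⟦R⟧-tangle of order 4. -/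
variable {V : Type*} {W : Type*}

namespace Stmt8

open SimpleGraph

variable {V : Type*}

/-! ### Basic separation lemmas -/

lemma sep_rev {G : SimpleGraph V} {Y S Z : Set V} (h : IsSeparation G Y S Z) :
    IsSeparation G Z S Y := by
  obtain ⟨h1, h2, h3, h4, h5⟩ := h
  refine ⟨h3.symm, h2.symm, h1.symm, ?_, fun z hz y hy hadj => h5 y hy z hz hadj.symm⟩
  ext x
  have := Set.ext_iff.1 h4 x
  simp only [Set.mem_union, Set.mem_univ, iff_true] at this ⊢
  tauto

lemma sep_cases {G : SimpleGraph V} {Y S Z : Set V} (h : IsSeparation G Y S Z) (x : V) :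
    x ∈ Y ∨ x ∈ S ∨ x ∈ Z := by
  have := Set.ext_iff.1 h.2.2.2.1 x
  simp only [Set.mem_union, Set.mem_univ, iff_true] at this
  tauto

lemma sep_no_adj {G : SimpleGraph V} {Y S Z : Set V} (h : IsSeparation G Y S Z)
    {y z : V} (hy : y ∈ Y) (hz : z ∈ Z) : ¬ G.Adj y z := h.2.2.2.2 y hy z hz

lemma sep_no_adj' {G : SimpleGraph V} {Y S Z : Set V} (h : IsSeparation G Y S Z)
    {y z : V} (hy : y ∈ Y) (hz : z ∈ Z) : ¬ G.Adj z y :=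
  fun hadj => h.2.2.2.2 y hy z hz hadj.symm

/-! ### Components of `G - R` -/

/-- The component of `G - R` containing `v` (assuming `v ∉ R`): all vertices reachable
from `v` by walks avoiding `R`. -/
def comp (G : SimpleGraph V) (R : Set V) (v : V) : Set V :=
  {w | ∃ p : G.Walk v w, ∀ x ∈ p.support, x ∉ R}

lemma mem_comp_self {G : SimpleGraph V} {R : Set V} {v : V} (hv : v ∉ R) :
    v ∈ comp G R v :=
  ⟨Walk.nil, by simp [hv]⟩

lemma comp_subset_compl {G : SimpleGraph V} {R : Set V} {v : V} :
    comp G R v ⊆ Rᶜ := by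
  rintro w ⟨p, hp⟩
  exact hp w p.end_mem_support

lemma comp_not_mem_R {G : SimpleGraph V} {R : Set V} {v w : V} (hw : w ∈ comp G R v) :
    w ∉ R := comp_subset_compl hw

lemma comp_start_not_mem_R {G : SimpleGraph V} {R : Set V} {v w : V}
    (hw : w ∈ comp G R v) : v ∉ R := by
  obtain ⟨p, hp⟩ := hw
  exact hp v p.start_mem_support

/-- Closure of components under adjacency outside `R`. -/
lemma comp_adj_closed {G : SimpleGraph V} {R : Set V} {v w u : V}
    (hw : w ∈ comp G R v) (hadj : G.Adj w u) (hu : u ∉ R) : u ∈ comp G R v := by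
  obtain ⟨p, hp⟩ := hw
  refine ⟨p.concat hadj, ?_⟩
  intro x hx
  rw [Walk.support_concat, List.mem_append] at hx
  rcases hx with hx | hx
  · exact hp x hx
  · simp only [List.mem_singleton] at hx
    exact hx ▸ hu

lemma comp_support_mem {G : SimpleGraph V} {R : Set V} {v w : V}
    (hw : w ∈ comp G R v) : ∀ {p : G.Walk v w}, (∀ x ∈ p.support, x ∉ R) →
      ∀ x ∈ p.support, x ∈ comp G R v := by
  intro p hp x hx
  classical
  exact ⟨p.takeUntil x hx, fun y hy => hp y (p.support_takeUntil_subset hx hy)⟩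

lemma comp_symm {G : SimpleGraph V} {R : Set V} {v w : V} (hw : w ∈ comp G R v) :
    v ∈ comp G R w := by
  obtain ⟨p, hp⟩ := hw
  refine ⟨p.reverse, ?_⟩
  intro x hx
  rw [Walk.support_reverse, List.mem_reverse] at hx
  exact hp x hx

lemma comp_trans {G : SimpleGraph V} {R : Set V} {u v w : V}
    (hv : v ∈ comp G R u) (hw : w ∈ comp G R v) : w ∈ comp G R u := by
  obtain ⟨p, hp⟩ := hv
  obtain ⟨q, hq⟩ := hw
  refine ⟨p.append q, ?_⟩
  intro x hx
  rw [Walk.mem_support_append_iff] at hx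
  rcases hx with hx | hx
  · exact hp x hx
  · exact hq x hx

lemma comp_eq_of_mem {G : SimpleGraph V} {R : Set V} {v w : V}
    (hw : w ∈ comp G R v) : comp G R w = comp G R v := by
  ext x
  exact ⟨fun hx => comp_trans hw hx, fun hx => comp_trans (comp_symm hw) hx⟩

/-- Lift a walk of `G` with support in `C` to reachability in `G.induce C`. -/
lemma reachable_induce_of_walk {G : SimpleGraph V} {C : Set V} :
    ∀ {a b : V} (p : G.Walk a b), (∀ x ∈ p.support, x ∈ C) →
      ∀ (ha : a ∈ C) (hb : b ∈ C), (G.induce C).Reachable ⟨a, ha⟩ ⟨b, hb⟩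
  | _, _, Walk.nil, _, _, _ => Reachable.refl _
  | a, b, Walk.cons (v := c) hadj q, hsup, ha, hb => by
      have hc : c ∈ C := hsup c (by simp [Walk.support_cons])
      have hstep : (G.induce C).Adj ⟨a, ha⟩ ⟨c, hc⟩ := hadj
      exact hstep.reachable.trans (reachable_induce_of_walk q
        (fun t ht => hsup t (by simp [Walk.support_cons, ht])) hc hb)

/-- Push a walk of `G.induce C` down to `G`. -/
def lowerWalk {G : SimpleGraph V} {C : Set V} :
    ∀ {a b : ↥C} (_ : (G.induce C).Walk a b), G.Walk a.1 b.1
  | _, _, Walk.nil => Walk.nil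
  | _, _, Walk.cons h p => Walk.cons h (lowerWalk p)

lemma lowerWalk_support {G : SimpleGraph V} {C : Set V} :
    ∀ {a b : ↥C} (p : (G.induce C).Walk a b), ∀ x ∈ (lowerWalk p).support, x ∈ C
  | a, _, Walk.nil => by
      intro x hx
      simp only [lowerWalk, Walk.support_nil, List.mem_singleton] at hx
      exact hx ▸ a.2
  | a, b, Walk.cons h p => by
      intro x hx
      simp only [lowerWalk] at hx
      change x ∈ (a : V) :: (lowerWalk p).support at hx
      rw [List.mem_cons] at hx
      rcases hx with rfl | hx
      · exact a.2
      · exact lowerWalk_support p x hx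

lemma isCompOutside_comp {G : SimpleGraph V} {R : Set V} {v : V} (hv : v ∉ R) :
    IsCompOutside G R (comp G R v) := by
  refine ⟨comp_subset_compl, ?_, ?_⟩
  · have hne : Nonempty ↥(comp G R v) := ⟨⟨v, mem_comp_self hv⟩⟩
    refine ⟨?_⟩
    rintro ⟨a, ha⟩ ⟨b, hb⟩
    have hb' := hb
    obtain ⟨p, hp⟩ := comp_symm ha
    obtain ⟨q, hq⟩ := hb'
    have hsup : ∀ x ∈ (p.append q).support, x ∈ comp G R v := by
      intro x hx
      rw [Walk.mem_support_append_iff] at hx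
      rcases hx with hx | hx
      · exact comp_eq_of_mem ha ▸ comp_support_mem (comp_symm ha) hp x hx
      · exact comp_support_mem hb hq x hx
    exact reachable_induce_of_walk (p.append q) hsup ha hb
  · intro u hu w hw hadj
    exact comp_adj_closed hu hadj hw

lemma isCompOutside_closed {G : SimpleGraph V} {R C : Set V} (hC : IsCompOutside G R C)
    {a b : V} (p : G.Walk a b) (hp : ∀ x ∈ p.support, x ∉ R) (ha : a ∈ C) : b ∈ C := by
  induction p with
  | nil => exact ha
  | cons h q ih =>
      rename_i x y z
      refine ih (fun t ht => hp t (by simp [Walk.support_cons, ht])) ?_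
      exact hC.2.2 x ha y (hp y (by simp [Walk.support_cons])) h

lemma comp_eq_of_isCompOutside {G : SimpleGraph V} {R C : Set V}
    (hC : IsCompOutside G R C) {v : V} (hv : v ∈ C) : C = comp G R v := by
  ext w
  constructor
  · intro hw
    obtain ⟨q⟩ := hC.2.1.1 ⟨v, hv⟩ ⟨w, hw⟩
    exact ⟨lowerWalk q, fun x hx => (hC.1 (lowerWalk_support q x hx) : x ∉ R)⟩
  · rintro ⟨p, hp⟩
    exact isCompOutside_closed hC p hp hv

lemma nbhd_subset_R {G : SimpleGraph V} {R C : Set V} (hC : IsCompOutside G R C) :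
    Nbhd G C ⊆ R := by
  rintro x ⟨hxC, u, hu, hadj⟩
  by_contra hxR
  exact hxC (hC.2.2 u hu x hxR hadj)

/-! ### Every component of `G - R` has at most 2 neighbours, for a triconnected region -/

lemma three_distinct {α : Type*} {s : Set α} (hfin : s.Finite) (hs : 3 ≤ s.ncard) :
    ∃ a ∈ s, ∃ b ∈ s, ∃ c ∈ s, a ≠ b ∧ a ≠ c ∧ b ≠ c := by
  obtain ⟨a, ha⟩ := Set.nonempty_of_ncard_ne_zero (show s.ncard ≠ 0 by omega)
  have h2 : (s \ {a}).ncard + 1 = s.ncard := Set.ncard_diff_singleton_add_one ha hfin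
  obtain ⟨b, hb⟩ := Set.nonempty_of_ncard_ne_zero (show (s \ {a}).ncard ≠ 0 by omega)
  have h3 : ((s \ {a}) \ {b}).ncard + 1 = (s \ {a}).ncard :=
    Set.ncard_diff_singleton_add_one hb hfin.diff
  obtain ⟨c, hc⟩ := Set.nonempty_of_ncard_ne_zero (show ((s \ {a}) \ {b}).ncard ≠ 0 by omega)
  refine ⟨a, ha, b, hb.1, c, hc.1.1, ?_, ?_, ?_⟩
  · intro h; exact hb.2 (by rw [Set.mem_singleton_iff]; exact h.symm)
  · intro h; exact hc.1.2 (by rw [Set.mem_singleton_iff]; exact h.symm)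
  · intro h; exact hc.2 (by rw [Set.mem_singleton_iff]; exact h.symm)

lemma exists_first_hit {G : SimpleGraph V} {S : Set V} :
    ∀ {a b : V} (p : G.Walk a b), b ∈ S →
      ∃ v, v ∈ S ∧ ∃ q : G.Walk a v, (∀ x ∈ q.support, x ∈ S → x = v) ∧
        (∀ x ∈ q.support, x ∈ p.support)
  | a, _, Walk.nil, hb => ⟨a, hb, Walk.nil, by simp, by simp⟩
  | a, b, Walk.cons (v := c) h p, hb => by
      by_cases haS : a ∈ S
      · exact ⟨a, haS, Walk.nil, by simp, by simp⟩
      · obtain ⟨v, hv, q, hq1, hq2⟩ := exists_first_hit p hb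
        refine ⟨v, hv, Walk.cons h q, ?_, ?_⟩
        · intro x hx hxS
          rw [Walk.support_cons, List.mem_cons] at hx
          rcases hx with rfl | hx
          · exact absurd hxS haS
          · exact hq1 x hx hxS
        · intro x hx
          rw [Walk.support_cons, List.mem_cons] at hx
          rcases hx with rfl | hx
          · exact Walk.start_mem_support _
          · rw [Walk.support_cons]
            exact List.mem_cons_of_mem a (hq2 x hx)

lemma exists_exit {G : SimpleGraph V} {A S Z : Set V} (hsep : IsSeparation G A S Z) :
    ∀ {a b : V} (p : G.Walk a b), a ∈ A → b ∉ A → ∃ x ∈ p.support, x ∈ S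
  | _, _, Walk.nil, ha, hb => absurd ha hb
  | a, b, Walk.cons (v := c) h p, ha, hb => by
      rcases sep_cases hsep c with hc | hc | hc
      · obtain ⟨x, hx1, hx2⟩ := exists_exit hsep p hc hb
        exact ⟨x, by rw [Walk.support_cons]; exact List.mem_cons_of_mem a hx1, hx2⟩
      · exact ⟨c, by rw [Walk.support_cons]; exact List.mem_cons_of_mem a p.start_mem_support, hc⟩
      · exact absurd h (hsep.2.2.2.2 a ha c hc)

lemma nbhd_ncard_le_two {V : Type*} [Fintype V] {G : SimpleGraph V} {R C : Set V}
    (hR : TriconnectedRegion G R) (hC : IsCompOutside G R C) :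
    (Nbhd G C).ncard ≤ 2 := by
  classical
  by_contra hcon
  obtain ⟨n₁, hn₁, n₂, hn₂, n₃, hn₃, h12, h13, h23⟩ :=
    three_distinct (Set.toFinite _) (by omega : 3 ≤ (Nbhd G C).ncard)
  obtain ⟨c₁, hc₁, ha₁⟩ := hn₁.2
  obtain ⟨c₂, hc₂, ha₂⟩ := hn₂.2
  obtain ⟨c₃, hc₃, ha₃⟩ := hn₃.2
  obtain ⟨P₀'⟩ := hC.2.1 ⟨c₂, hc₂⟩ ⟨c₃, hc₃⟩
  have hP₀sup : ∀ x ∈ (lowerWalk P₀').support, x ∈ C := lowerWalk_support P₀'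
  set P : G.Walk c₂ c₃ := ((lowerWalk P₀').toPath : G.Walk c₂ c₃) with hPdef
  have hPpath : P.IsPath := (lowerWalk P₀').toPath.2
  have hPsup : ∀ x ∈ P.support, x ∈ C :=
    fun x hx => hP₀sup x ((lowerWalk P₀').support_toPath_subset hx)
  obtain ⟨Q₀'⟩ := hC.2.1 ⟨c₁, hc₁⟩ ⟨c₂, hc₂⟩
  have hQ₀sup : ∀ x ∈ (lowerWalk Q₀').support, x ∈ C := lowerWalk_support Q₀'
  obtain ⟨v, hvP, Q, hQ1, hQ2⟩ :=
    exists_first_hit (S := {x | x ∈ P.support}) (lowerWalk Q₀') P.start_mem_support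
  have hQsup : ∀ x ∈ Q.support, x ∈ C := fun x hx => hQ₀sup x (hQ2 x hx)
  have hvC : v ∈ C := hPsup v hvP
  set P₁ : G.Walk c₂ v := P.takeUntil v hvP with hP₁def
  set P₂ : G.Walk v c₃ := P.dropUntil v hvP with hP₂def
  have hP₁sub : ∀ x ∈ P₁.support, x ∈ P.support := fun x hx =>
    P.support_takeUntil_subset hvP hx
  have hP₂sub : ∀ x ∈ P₂.support, x ∈ P.support := fun x hx =>
    P.support_dropUntil_subset hvP hx
  have hP₁P₂ : ∀ x, x ∈ P₁.support → x ∈ P₂.support → x = v := by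
    intro x hx₁ hx₂
    by_contra hne
    have hnodup := hPpath.support_nodup
    rw [← P.take_spec hvP, Walk.support_append, List.nodup_append] at hnodup
    have hx₂' : x ∈ P₂.support.tail := by
      rw [P₂.support_eq_cons, List.mem_cons] at hx₂
      exact hx₂.resolve_left hne
    exact hnodup.2.2 x hx₁ x hx₂' rfl
  -- the three fans from v
  set F₁ : G.Walk v n₁ := Q.reverse.append (Walk.cons ha₁ Walk.nil) with hF₁def
  set F₂ : G.Walk v n₂ := P₁.reverse.append (Walk.cons ha₂ Walk.nil) with hF₂def
  set F₃ : G.Walk v n₃ := P₂.append (Walk.cons ha₃ Walk.nil) with hF₃def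
  have hsupF : ∀ {x n : V} (hadj : G.Adj x n) (w : G.Walk v x),
      ∀ y ∈ (w.append (Walk.cons hadj Walk.nil)).support, y ∈ w.support ∨ y = n := by
    intro x n hadj w y hy
    rw [Walk.mem_support_append_iff] at hy
    rcases hy with hy | hy
    · exact Or.inl hy
    · rw [Walk.support_cons, Walk.support_nil, List.mem_cons, List.mem_singleton] at hy
      rcases hy with rfl | rfl
      · exact Or.inl w.end_mem_support
      · exact Or.inr rfl
  have hmemrev : ∀ {a b : V} (w : G.Walk a b) (x : V), x ∈ w.reverse.support → x ∈ w.support := by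
    intro a b w x hx
    rwa [Walk.support_reverse, List.mem_reverse] at hx
  have hF₁sup : ∀ y ∈ F₁.support, y ∈ Q.support ∨ y = n₁ := by
    intro y hy
    rcases hsupF ha₁ Q.reverse y hy with hy | hy
    · exact Or.inl (hmemrev Q y hy)
    · exact Or.inr hy
  have hF₂sup : ∀ y ∈ F₂.support, y ∈ P₁.support ∨ y = n₂ := by
    intro y hy
    rcases hsupF ha₂ P₁.reverse y hy with hy | hy
    · exact Or.inl (hmemrev P₁ y hy)
    · exact Or.inr hy
  have hF₃sup : ∀ y ∈ F₃.support, y ∈ P₂.support ∨ y = n₃ := fun y hy => hsupF ha₃ P₂ y hy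
  -- pairwise: common support only at v
  have hd12 : ∀ x, x ∈ F₁.support → x ∈ F₂.support → x = v := by
    intro x h1 h2
    rcases hF₁sup x h1 with h1' | h1e
    · rcases hF₂sup x h2 with h2' | h2e
      · exact hQ1 x h1' (hP₁sub x h2')
      · rw [h2e] at h1'; exact absurd (hQsup _ h1') hn₂.1
    · rcases hF₂sup x h2 with h2' | h2e
      · rw [h1e] at h2'; exact absurd (hPsup _ (hP₁sub _ h2')) hn₁.1
      · rw [h1e] at h2e; exact absurd h2e h12
  have hd13 : ∀ x, x ∈ F₁.support → x ∈ F₃.support → x = v := by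
    intro x h1 h2
    rcases hF₁sup x h1 with h1' | h1e
    · rcases hF₃sup x h2 with h2' | h2e
      · exact hQ1 x h1' (hP₂sub x h2')
      · rw [h2e] at h1'; exact absurd (hQsup _ h1') hn₃.1
    · rcases hF₃sup x h2 with h2' | h2e
      · rw [h1e] at h2'; exact absurd (hPsup _ (hP₂sub _ h2')) hn₁.1
      · rw [h1e] at h2e; exact absurd h2e h13
  have hd23 : ∀ x, x ∈ F₂.support → x ∈ F₃.support → x = v := by
    intro x h1 h2
    rcases hF₂sup x h1 with h1' | h1e
    · rcases hF₃sup x h2 with h2' | h2e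
      · exact hP₁P₂ x h1' h2'
      · rw [h2e] at h1'; exact absurd (hPsup _ (hP₁sub _ h1')) hn₃.1
    · rcases hF₃sup x h2 with h2' | h2e
      · rw [h1e] at h2'; exact absurd (hPsup _ (hP₂sub _ h2')) hn₂.1
      · rw [h1e] at h2e; exact absurd h2e h23
  have hvR : v ∉ R := hC.1 hvC
  have hn₁R : n₁ ∈ R := nbhd_subset_R hC hn₁
  have hn₂R : n₂ ∈ R := nbhd_subset_R hC hn₂
  have hn₃R : n₃ ∈ R := nbhd_subset_R hC hn₃
  -- the key contradiction with a small separation putting v on the far side from R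
  have key : ∀ A' S' Z', IsSeparation G A' S' Z' → S'.ncard ≤ 2 → v ∈ A' →
      R ∩ A' = ∅ → False := by
    intro A' S' Z' hsep' hS' hvA' hRA'
    have hnotA : ∀ n, n ∈ R → n ∉ A' := fun n hnR hnA =>
      (Set.eq_empty_iff_forall_notMem.1 hRA') n ⟨hnR, hnA⟩
    obtain ⟨x₁, hx₁F, hx₁S⟩ := exists_exit hsep' F₁ hvA' (hnotA n₁ hn₁R)
    obtain ⟨x₂, hx₂F, hx₂S⟩ := exists_exit hsep' F₂ hvA' (hnotA n₂ hn₂R)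
    obtain ⟨x₃, hx₃F, hx₃S⟩ := exists_exit hsep' F₃ hvA' (hnotA n₃ hn₃R)
    have hxv : ∀ x, x ∈ S' → x ≠ v := by
      intro x hx hxv
      subst hxv
      exact (Set.disjoint_left.1 hsep'.1) hvA' hx
    have hne12 : x₁ ≠ x₂ := fun h => hxv x₁ hx₁S (hd12 x₁ hx₁F (h ▸ hx₂F))
    have hne13 : x₁ ≠ x₃ := fun h => hxv x₁ hx₁S (hd13 x₁ hx₁F (h ▸ hx₃F))
    have hne23 : x₂ ≠ x₃ := fun h => hxv x₂ hx₂S (hd23 x₂ hx₂F (h ▸ hx₃F))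
    have htriple : ({x₁, x₂, x₃} : Set V).ncard = 3 := by
      rw [Set.ncard_insert_of_notMem (by simp [hne12, hne13]), Set.ncard_pair hne23]
    have hle : ({x₁, x₂, x₃} : Set V).ncard ≤ S'.ncard := by
      apply Set.ncard_le_ncard _ (Set.toFinite _)
      intro t ht
      rcases ht with rfl | rfl | rfl
      · exact hx₁S
      · exact hx₂S
      · exact hx₃S
    omega
  -- maximality of R applied to R ∪ {v}
  have hmax := hR.2.2 (insert v R) (Set.ssubset_insert hvR)
  simp only [KInseparable, not_and, not_not] at hmax
  have hcard : 2 < (insert v R).ncard := by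
    have h4 : 4 ≤ R.ncard := hR.2.1
    have := Set.ncard_le_ncard (Set.subset_insert v R) (Set.toFinite _)
    omega
  obtain ⟨A, S, Z, hsep, hS2, hAne, hZne⟩ := hmax hcard
  by_cases hRA : (R ∩ A).Nonempty
  · by_cases hRZ : (R ∩ Z).Nonempty
    · exact hR.1.2 ⟨A, S, Z, hsep, hS2, hRA, hRZ⟩
    · -- R ∩ Z = ∅, so v ∈ Z
      obtain ⟨t, htX, htZ⟩ := hZne
      rcases htX with rfl | htR
      · exact key Z S A (sep_rev hsep) hS2 htZ (Set.not_nonempty_iff_eq_empty.1 hRZ)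
      · exact hRZ ⟨t, htR, htZ⟩
  · obtain ⟨t, htX, htA⟩ := hAne
    rcases htX with rfl | htR
    · exact key A S Z hsep hS2 htA (Set.not_nonempty_iff_eq_empty.1 hRA)
    · exact hRA ⟨t, htR, htA⟩


/-! ### Tangle lemmas -/

section Tangle

variable {V : Type*} [Fintype V] {G : SimpleGraph V} {R : Set V}
  {T : Set (Set V × Set V × Set V)}

lemma htrunc_mem
    (htrunc : {p : Set V × Set V × Set V | p ∈ T ∧ p.2.1.ncard < 3} =
      {p : Set V × Set V × Set V |
        IsSeparation G p.1 p.2.1 p.2.2 ∧ p.2.1.ncard < 3 ∧ R ⊆ p.2.1 ∪ p.2.2})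
    {Y S Z : Set V} (hsep : IsSeparation G Y S Z) (h3 : S.ncard < 3)
    (hRS : R ⊆ S ∪ Z) : (Y, S, Z) ∈ T := by
  have hmem : (Y, S, Z) ∈ {p : Set V × Set V × Set V |
      IsSeparation G p.1 p.2.1 p.2.2 ∧ p.2.1.ncard < 3 ∧ R ⊆ p.2.1 ∪ p.2.2} :=
    ⟨hsep, h3, hRS⟩
  rw [← htrunc] at hmem
  exact hmem.1

/-- Lemma K: the far side of any separation in the tangle meets `R`. -/
lemma lemK (hR : TriconnectedRegion G R) (hT : IsTangle G 4 T)
    (htrunc : {p : Set V × Set V × Set V | p ∈ T ∧ p.2.1.ncard < 3} =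
      {p : Set V × Set V × Set V |
        IsSeparation G p.1 p.2.1 p.2.2 ∧ p.2.1.ncard < 3 ∧ R ⊆ p.2.1 ∪ p.2.2}) :
    ∀ p ∈ T, (p.2.2 ∩ R).Nonempty := by
  suffices H : ∀ n : ℕ, ∀ p ∈ T, p.2.2.ncard ≤ n → (p.2.2 ∩ R).Nonempty by
    intro p hp; exact H (p.2.2.ncard) p hp le_rfl
  intro n
  induction n with
  | zero =>
      intro p hp h0
      obtain ⟨z, hz⟩ := hT.2.2.2 p hp
      have hzero : p.2.2.ncard = 0 := Nat.le_antisymm h0 (Nat.zero_le _)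
      rw [Set.ncard_eq_zero (Set.toFinite _)] at hzero
      rw [hzero] at hz
      exact absurd hz (Set.notMem_empty z)
  | succ n ih =>
      rintro ⟨Y, S, Z⟩ hp hn
      by_contra hcon
      have hZR : Z ∩ R = ∅ := Set.not_nonempty_iff_eq_empty.1 hcon
      obtain ⟨z, hz⟩ := hT.2.2.2 (Y, S, Z) hp
      have hsep : IsSeparation G Y S Z := (hT.1 (Y, S, Z) hp).1
      have hZnR : ∀ x ∈ Z, x ∉ R := by
        intro x hx hxR
        have : x ∈ Z ∩ R := ⟨hx, hxR⟩
        rw [hZR] at this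
        exact this
      have hzR : z ∉ R := hZnR z hz
      set C := comp G R z with hCdef
      have hCO : IsCompOutside G R C := isCompOutside_comp hzR
      set B := Nbhd G C with hBdef
      have hB2 : B.ncard ≤ 2 := nbhd_ncard_le_two hR hCO
      have hBR : B ⊆ R := nbhd_subset_R hCO
      set E := (C ∪ B)ᶜ with hEdef
      have hqsep : IsSeparation G C B E := by
        refine ⟨?_, ?_, ?_, ?_, ?_⟩
        · rw [Set.disjoint_left]; intro x hxC hxB; exact hxB.1 hxC
        · rw [Set.disjoint_left]; intro x hxC hxE; exact hxE (Or.inl hxC)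
        · rw [Set.disjoint_left]; intro x hxB hxE; exact hxE (Or.inr hxB)
        · ext x
          simp only [Set.mem_union, Set.mem_compl_iff, Set.mem_univ, iff_true]
          tauto
        · intro u huC w hwE hadj
          by_cases hwR : w ∈ R
          · exact hwE (Or.inr ⟨fun hwC => (hCO.1 hwC) hwR, u, huC, hadj⟩)
          · exact hwE (Or.inl (hCO.2.2 u huC w hwR hadj))
      have hqT : (C, B, E) ∈ T := by
        refine htrunc_mem htrunc hqsep (lt_of_le_of_lt hB2 (by norm_num)) ?_
        intro x hxR
        by_cases hxB : x ∈ B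
        · exact Or.inl hxB
        · exact Or.inr (fun hmem => by
            rcases hmem with hxC | hxB'
            · exact (hCO.1 hxC) hxR
            · exact hxB hxB')
      set Zc := Z \ C with hZcdef
      set Sc := S \ C with hScdef
      set Yc := Y ∪ S ∩ C ∪ Z ∩ C with hYcdef
      have hedge1 : ∀ u ∈ C, ∀ w ∈ Z \ C, ¬ G.Adj u w := by
        intro u huC w hw hadj
        exact hw.2 (hCO.2.2 u huC w (hZnR w hw.1) hadj)
      have hsepc : IsSeparation G Yc Sc Zc := by
        refine ⟨?_, ?_, ?_, ?_, ?_⟩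
        · rw [Set.disjoint_left]
          rintro x ((hx | hx) | hx) hxSc
          · exact (Set.disjoint_left.1 hsep.1) hx hxSc.1
          · exact hxSc.2 hx.2
          · exact (Set.disjoint_left.1 hsep.2.2.1) hxSc.1 hx.1
        · rw [Set.disjoint_left]
          rintro x ((hx | hx) | hx) hxZc
          · exact (Set.disjoint_left.1 hsep.2.1) hx hxZc.1
          · exact (Set.disjoint_left.1 hsep.2.2.1) hx.1 hxZc.1
          · exact hxZc.2 hx.2
        · rw [Set.disjoint_left]
          intro x hxSc hxZc
          exact (Set.disjoint_left.1 hsep.2.2.1) hxSc.1 hxZc.1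
        · rw [hYcdef, hScdef, hZcdef]
          ext x
          simp only [Set.mem_union, Set.mem_inter_iff, Set.mem_diff, Set.mem_univ, iff_true]
          rcases sep_cases hsep x with hx | hx | hx
          · tauto
          · by_cases hxC : x ∈ C <;> tauto
          · by_cases hxC : x ∈ C <;> tauto
        · rintro y ((hy | hy) | hy) w hw hadj
          · exact sep_no_adj hsep hy hw.1 hadj
          · exact hedge1 y hy.2 w hw hadj
          · exact hedge1 y hy.2 w hw hadj
      have hordc : Sc.ncard < 4 :=
        lt_of_le_of_lt (Set.ncard_le_ncard Set.diff_subset (Set.toFinite _))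
          (hT.1 (Y, S, Z) hp).2
      have hcT : (Yc, Sc, Zc) ∈ T := by
        rcases hT.2.1 Yc Sc Zc hsepc hordc with h | h
        · exact h
        · exfalso
          have main : ∀ a b : V, G.Adj a b → a ∈ Z → (a ∈ E ∨ b ∈ E) →
              (a ∈ Yc ∨ b ∈ Yc) → False := by
            intro a b hadj haZ hE hY
            rcases hE with haE | hbE
            · have hanC : a ∉ C := fun h => haE (Or.inl h)
              rcases hY with haY | hbY
              · rcases haY with (h | h) | h
                · exact (Set.disjoint_left.1 hsep.2.1) h haZ
                · exact (Set.disjoint_left.1 hsep.2.2.1) h.1 haZ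
                · exact hanC h.2
              · rcases hbY with (h | h) | h
                · exact sep_no_adj hsep h haZ hadj.symm
                · exact hedge1 b h.2 a ⟨haZ, hanC⟩ hadj.symm
                · exact hedge1 b h.2 a ⟨haZ, hanC⟩ hadj.symm
            · rcases hY with haY | hbY
              · have haC : a ∈ C := by
                  rcases haY with (h | h) | h
                  · exact absurd haZ (Set.disjoint_left.1 hsep.2.1 h)
                  · exact absurd haZ (Set.disjoint_left.1 hsep.2.2.1 h.1)
                  · exact h.2
                exact hqsep.2.2.2.2 a haC b hbE hadj
              · rcases hbY with (h | h) | h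
                · exact sep_no_adj hsep h haZ hadj.symm
                · exact hbE (Or.inl h.2)
                · exact hbE (Or.inl h.2)
          rcases hT.2.2.1 (Y, S, Z) hp (C, B, E) hqT (Zc, Sc, Yc) h with
            ⟨x, hx⟩ | ⟨u, w, hadj, hu, hw, hy⟩
          · obtain ⟨⟨hxZ, hxE⟩, hxY⟩ := hx
            rcases hxY with (h' | h') | h'
            · exact (Set.disjoint_left.1 hsep.2.1) h' hxZ
            · exact (Set.disjoint_left.1 hsep.2.2.1) h'.1 hxZ
            · exact hxE (Or.inl h'.2)
          · rcases hu with huZ | hwZ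
            · exact main u w hadj huZ hw hy
            · exact main w u hadj.symm hwZ (Or.symm hw) (Or.symm hy)
      have hzC : z ∈ C := mem_comp_self hzR
      have hssub : Zc ⊂ Z := ⟨Set.diff_subset, fun hsub => (hsub hz).2 hzC⟩
      have hlt : Zc.ncard < Z.ncard := Set.ncard_lt_ncard hssub (Set.toFinite _)
      obtain ⟨x, hxZc, hxR⟩ := ih (Yc, Sc, Zc) hcT
        (by have hn' : Z.ncard ≤ n + 1 := hn; show Zc.ncard ≤ n; omega)
      have : x ∈ Z ∩ R := ⟨hxZc.1, hxR⟩
      rw [hZR] at this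
      exact this

end Tangle

/-! ### Lifting torso separations -/

section Lift

variable {V : Type*} [Fintype V] {G : SimpleGraph V} {R : Set V}
  {T : Set (Set V × Set V × Set V)}

lemma val_image_subset (A : Set ↥R) : (Subtype.val '' A : Set V) ⊆ R := by
  rintro x ⟨a, _, rfl⟩; exact a.2

lemma mem_val_image {A : Set ↥R} {x : V} (hx : x ∈ R) :
    x ∈ Subtype.val '' A ↔ (⟨x, hx⟩ : ↥R) ∈ A := by
  constructor
  · rintro ⟨⟨y, hy⟩, ha, rfl⟩
    exact ha
  · intro h; exact ⟨⟨x, hx⟩, h, rfl⟩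

lemma val_image_setOf {X : Set V} :
    (Subtype.val '' {w : ↥R | (w : V) ∈ X} : Set V) = X ∩ R := by
  ext x
  constructor
  · rintro ⟨a, ha, rfl⟩; exact ⟨ha, a.2⟩
  · rintro ⟨hx, hxR⟩; exact ⟨⟨x, hxR⟩, hx, rfl⟩

lemma disjoint_val_image {A B : Set ↥R} (h : Disjoint A B) :
    Disjoint (Subtype.val '' A : Set V) (Subtype.val '' B) := by
  rw [Set.disjoint_left]
  rintro x ⟨a, ha, rfl⟩ ⟨b, hb, hba⟩
  have hab : b = a := Subtype.val_injective hba
  exact Set.disjoint_left.1 h ha (hab ▸ hb)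

lemma torso_adj_of_adj {x y : V} (hx : x ∈ R) (hy : y ∈ R) (h : G.Adj x y) :
    (torso G R).Adj ⟨x, hx⟩ ⟨y, hy⟩ :=
  ⟨fun he => h.ne (congrArg Subtype.val he), Or.inl h⟩

lemma torso_adj_of_nbhd {C : Set V} (hC : IsCompOutside G R C) {x y : V}
    (hx : x ∈ R) (hy : y ∈ R) (hxN : x ∈ Nbhd G C) (hyN : y ∈ Nbhd G C)
    (hne : x ≠ y) : (torso G R).Adj ⟨x, hx⟩ ⟨y, hy⟩ :=
  ⟨fun he => hne (congrArg Subtype.val he), Or.inr ⟨C, hC, hxN, hyN⟩⟩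

lemma no_cross_adj {Y' S' Z' : Set ↥R} (hq : IsSeparation (torso G R) Y' S' Z')
    {x z : V} (hx : x ∈ (Subtype.val '' Y' : Set V)) (hz : z ∈ (Subtype.val '' Z' : Set V)) :
    ¬ G.Adj x z := by
  obtain ⟨a, ha, rfl⟩ := hx
  obtain ⟨b, hb, rfl⟩ := hz
  intro h
  exact sep_no_adj hq ha hb (torso_adj_of_adj a.2 b.2 h)

lemma no_cross_comp {Y' S' Z' : Set ↥R} (hq : IsSeparation (torso G R) Y' S' Z')
    {C : Set V} (hC : IsCompOutside G R C) {x z : V}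
    (hx : x ∈ (Subtype.val '' Y' : Set V)) (hz : z ∈ (Subtype.val '' Z' : Set V))
    (hxN : x ∈ Nbhd G C) (hzN : z ∈ Nbhd G C) : False := by
  obtain ⟨a, ha, rfl⟩ := hx
  obtain ⟨b, hb, rfl⟩ := hz
  have hne : (a : V) ≠ (b : V) := by
    intro h
    have hab : a = b := Subtype.val_injective h
    exact Set.disjoint_left.1 hq.2.1 ha (hab ▸ hb)
  exact sep_no_adj hq ha hb (torso_adj_of_nbhd hC a.2 b.2 hxN hzN hne)

/-- The canonical lift of a torso separation: Y-side. -/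
def liftY (G : SimpleGraph V) (R : Set V) (Y' Z' : Set ↥R) : Set V :=
  (Subtype.val '' Y' : Set V) ∪
    {v | v ∉ R ∧ ¬ (Nbhd G (comp G R v) ∩ (Subtype.val '' Z' : Set V)).Nonempty}

/-- The canonical lift of a torso separation: Z-side. -/
def liftZ (G : SimpleGraph V) (R : Set V) (Z' : Set ↥R) : Set V :=
  (Subtype.val '' Z' : Set V) ∪
    {v | v ∉ R ∧ (Nbhd G (comp G R v) ∩ (Subtype.val '' Z' : Set V)).Nonempty}

lemma lift_sep {Y' S' Z' : Set ↥R} (hq : IsSeparation (torso G R) Y' S' Z') :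
    IsSeparation G (liftY G R Y' Z') (Subtype.val '' S') (liftZ G R Z') := by
  refine ⟨?_, ?_, ?_, ?_, ?_⟩
  · rw [Set.disjoint_left]
    rintro x (hx | hx) hxS
    · exact Set.disjoint_left.1 (disjoint_val_image hq.1) hx hxS
    · exact hx.1 (val_image_subset _ hxS)
  · rw [Set.disjoint_left]
    rintro x (hx | hx) (hz | hz)
    · exact Set.disjoint_left.1 (disjoint_val_image hq.2.1) hx hz
    · exact hz.1 (val_image_subset _ hx)
    · exact hx.1 (val_image_subset _ hz)
    · exact hx.2 hz.2
  · rw [Set.disjoint_left]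
    rintro x hx (hz | hz)
    · exact Set.disjoint_left.1 (disjoint_val_image hq.2.2.1) hx hz
    · exact hz.1 (val_image_subset _ hx)
  · ext x
    simp only [Set.mem_union, Set.mem_univ, iff_true]
    by_cases hxR : x ∈ R
    · rcases sep_cases hq ⟨x, hxR⟩ with h | h | h
      · exact Or.inl (Or.inl (Or.inl ⟨⟨x, hxR⟩, h, rfl⟩))
      · exact Or.inl (Or.inr ⟨⟨x, hxR⟩, h, rfl⟩)
      · exact Or.inr (Or.inl ⟨⟨x, hxR⟩, h, rfl⟩)
    · by_cases hne : (Nbhd G (comp G R x) ∩ (Subtype.val '' Z' : Set V)).Nonempty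
      · exact Or.inr (Or.inr ⟨hxR, hne⟩)
      · exact Or.inl (Or.inl (Or.inr ⟨hxR, hne⟩))
  · rintro y (hy | hy) z (hz | hz) hadj
    · exact no_cross_adj hq hy hz hadj
    · -- y ∈ val '' Y', z in a big component
      obtain ⟨b, hbN, hbZ⟩ := hz.2
      have hyN : y ∈ Nbhd G (comp G R z) := by
        refine ⟨fun h => (comp_subset_compl h) (val_image_subset _ hy), z, mem_comp_self hz.1, hadj.symm⟩
      exact no_cross_comp hq (isCompOutside_comp hz.1) hy hbZ hyN hbN
    · -- y in a junk component, z ∈ val '' Z'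
      refine hy.2 ⟨z, ?_, hz⟩
      exact ⟨fun h => (comp_subset_compl h) (val_image_subset _ hz), y, mem_comp_self hy.1, hadj⟩
    · -- both outside R: same component
      obtain ⟨hy1, hy2⟩ := hy
      obtain ⟨hz1, hz2⟩ := hz
      have hzy : z ∈ comp G R y := comp_adj_closed (mem_comp_self hy1) hadj hz1
      have hcc : comp G R z = comp G R y := comp_eq_of_mem hzy
      rw [hcc] at hz2
      exact hy2 hz2

lemma proj_liftY {Y' Z' : Set ↥R} :
    {w : ↥R | (w : V) ∈ liftY G R Y' Z'} = Y' := by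
  ext w
  constructor
  · rintro (h | h)
    · exact (mem_val_image w.2).1 h
    · exact absurd w.2 h.1
  · intro h
    exact Or.inl ⟨w, h, rfl⟩

lemma proj_liftZ {Z' : Set ↥R} :
    {w : ↥R | (w : V) ∈ liftZ G R Z'} = Z' := by
  ext w
  constructor
  · rintro (h | h)
    · exact (mem_val_image w.2).1 h
    · exact absurd w.2 h.1
  · intro h
    exact Or.inl ⟨w, h, rfl⟩

lemma proj_val {A : Set ↥R} :
    {w : ↥R | (w : V) ∈ (Subtype.val '' A : Set V)} = A := by
  ext w
  constructor
  · intro h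
    exact (mem_val_image w.2).1 h
  · intro h
    exact ⟨w, h, rfl⟩

/-- The cleaning argument: if some member of `T` projects to the torso separation `q`,
then the canonical lift of `q` is in `T`. -/
lemma lift_mem_T (hR : TriconnectedRegion G R) (hT : IsTangle G 4 T)
    (htrunc : {p : Set V × Set V × Set V | p ∈ T ∧ p.2.1.ncard < 3} =
      {p : Set V × Set V × Set V |
        IsSeparation G p.1 p.2.1 p.2.2 ∧ p.2.1.ncard < 3 ∧ R ⊆ p.2.1 ∪ p.2.2})
    {Y' S' Z' : Set ↥R} (hq : IsSeparation (torso G R) Y' S' Z') :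
    ∀ p ∈ T, p.1 ∩ R = (Subtype.val '' Y' : Set V) →
      p.2.1 ∩ R = (Subtype.val '' S' : Set V) →
      p.2.2 ∩ R = (Subtype.val '' Z' : Set V) →
      (liftY G R Y' Z', (Subtype.val '' S' : Set V), liftZ G R Z') ∈ T := by
  suffices H : ∀ n : ℕ, ∀ p ∈ T, p.2.2.ncard ≤ n →
      p.1 ∩ R = (Subtype.val '' Y' : Set V) →
      p.2.1 ∩ R = (Subtype.val '' S' : Set V) →
      p.2.2 ∩ R = (Subtype.val '' Z' : Set V) →
      (liftY G R Y' Z', (Subtype.val '' S' : Set V), liftZ G R Z') ∈ T by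
    intro p hp e1 e2 e3
    exact H p.2.2.ncard p hp le_rfl e1 e2 e3
  intro n
  induction n with
  | zero =>
      intro p hp h0 _ _ _
      obtain ⟨z, hz⟩ := hT.2.2.2 p hp
      have hzero : p.2.2.ncard = 0 := Nat.le_antisymm h0 (Nat.zero_le _)
      rw [Set.ncard_eq_zero (Set.toFinite _)] at hzero
      rw [hzero] at hz
      exact absurd hz (Set.notMem_empty z)
  | succ n ih =>
      rintro ⟨Yp, Sp, Zp⟩ hp hn e1 e2 e3
      have hsepp : IsSeparation G Yp Sp Zp := (hT.1 (Yp, Sp, Zp) hp).1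
      have hordp : Sp.ncard < 4 := (hT.1 (Yp, Sp, Zp) hp).2
      by_cases hjunk : ∃ v, v ∈ Zp ∧ v ∉ R ∧
          ¬ (Nbhd G (comp G R v) ∩ (Subtype.val '' Z' : Set V)).Nonempty
      · -- cleaning step
        obtain ⟨v, hvZ, hvR, hvN⟩ := hjunk
        set C := comp G R v with hCdef
        have hCO : IsCompOutside G R C := isCompOutside_comp hvR
        set B := Nbhd G C with hBdef
        set St := (C ∩ Sp) ∪ (B ∩ Sp) with hStdef
        set Wt := ((C ∩ Zp) ∪ St)ᶜ with hWtdef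
        have hedgeCZ : ∀ y ∈ C ∩ Zp, ∀ z ∈ Zp \ C, ¬ G.Adj y z := by
          intro y hy z hz hadj
          by_cases hzR : z ∈ R
          · have hzB : z ∈ B := ⟨fun h => (hCO.1 h) hzR, y, hy.1, hadj⟩
            have hzZv : z ∈ (Subtype.val '' Z' : Set V) := by
              rw [← e3]; exact ⟨hz.1, hzR⟩
            exact hvN ⟨z, hzB, hzZv⟩
          · exact hz.2 (hCO.2.2 y hy.1 z hzR hadj)
        have hsept : IsSeparation G Wt St (C ∩ Zp) := by
          refine ⟨?_, ?_, ?_, ?_, ?_⟩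
          · rw [Set.disjoint_left]
            intro x hx hxS
            exact hx (Or.inr hxS)
          · rw [Set.disjoint_left]
            intro x hx hxZ
            exact hx (Or.inl hxZ)
          · rw [Set.disjoint_left]
            rintro x (hx | hx) hxZ
            · exact Set.disjoint_left.1 hsepp.2.2.1 hx.2 hxZ.2
            · exact Set.disjoint_left.1 hsepp.2.2.1 hx.2 hxZ.2
          · rw [hWtdef, hStdef]
            ext x
            simp only [Set.mem_union, Set.mem_compl_iff, Set.mem_inter_iff, Set.mem_univ,
              iff_true]
            tauto
          · intro u huW z hz hadj
            by_cases huR : u ∈ R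
            · have huB : u ∈ B := ⟨fun h => (hCO.1 h) huR, z, hz.1, hadj.symm⟩
              rcases sep_cases hsepp u with hu | hu | hu
              · exact sep_no_adj hsepp hu hz.2 hadj
              · exact huW (Or.inr (Or.inr ⟨huB, hu⟩))
              · have huZv : u ∈ (Subtype.val '' Z' : Set V) := by
                  rw [← e3]; exact ⟨hu, huR⟩
                exact hvN ⟨u, huB, huZv⟩
            · have huC : u ∈ C := hCO.2.2 z hz.1 u huR hadj.symm
              rcases sep_cases hsepp u with hu | hu | hu
              · exact sep_no_adj hsepp hu hz.2 hadj
              · exact huW (Or.inr (Or.inl ⟨huC, hu⟩))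
              · exact huW (Or.inl ⟨huC, hu⟩)
        have hordt : St.ncard < 4 := by
          refine lt_of_le_of_lt (Set.ncard_le_ncard ?_ (Set.toFinite _)) hordp
          rintro x (hx | hx)
          · exact hx.2
          · exact hx.2
        have hrT : (C ∩ Zp, St, Wt) ∈ T := by
          rcases hT.2.1 Wt St (C ∩ Zp) hsept hordt with h | h
          · exfalso
            obtain ⟨x, hx1, hx2⟩ := lemK hR hT htrunc (Wt, St, C ∩ Zp) h
            exact (comp_subset_compl hx1.1) hx2
          · exact h
        have hsepc : IsSeparation G (Yp ∪ C ∩ Zp) Sp (Zp \ C) := by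
          refine ⟨?_, ?_, ?_, ?_, ?_⟩
          · rw [Set.disjoint_left]
            rintro x (hx | hx) hxS
            · exact Set.disjoint_left.1 hsepp.1 hx hxS
            · exact Set.disjoint_left.1 hsepp.2.2.1 hxS hx.2
          · rw [Set.disjoint_left]
            rintro x (hx | hx) hxZ
            · exact Set.disjoint_left.1 hsepp.2.1 hx hxZ.1
            · exact hxZ.2 hx.1
          · rw [Set.disjoint_left]
            intro x hx hxZ
            exact Set.disjoint_left.1 hsepp.2.2.1 hx hxZ.1
          · ext x
            simp only [Set.mem_union, Set.mem_inter_iff, Set.mem_diff, Set.mem_univ, iff_true]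
            rcases sep_cases hsepp x with hx | hx | hx
            · tauto
            · tauto
            · by_cases hxC : x ∈ C <;> tauto
          · rintro y (hy | hy) z hz hadj
            · exact sep_no_adj hsepp hy hz.1 hadj
            · exact hedgeCZ y hy z hz hadj
        have hcT : (Yp ∪ C ∩ Zp, Sp, Zp \ C) ∈ T := by
          rcases hT.2.1 _ _ _ hsepc hordp with h | h
          · exact h
          · exfalso
            have main : ∀ a b : V, G.Adj a b → a ∈ Zp → (a ∈ Wt ∨ b ∈ Wt) →
                (a ∈ Yp ∪ C ∩ Zp ∨ b ∈ Yp ∪ C ∩ Zp) → False := by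
              intro a b hadj haZ hW hY
              rcases hW with haW | hbW
              · have hanC : a ∉ C := fun h => haW (Or.inl ⟨h, haZ⟩)
                rcases hY with haY | hbY
                · rcases haY with h' | h'
                  · exact Set.disjoint_left.1 hsepp.2.1 h' haZ
                  · exact haW (Or.inl h')
                · rcases hbY with h' | h'
                  · exact sep_no_adj hsepp h' haZ hadj.symm
                  · exact hedgeCZ b h' a ⟨haZ, hanC⟩ hadj.symm
              · rcases hY with haY | hbY
                · have haCZ : a ∈ C ∩ Zp := by
                    rcases haY with h' | h'
                    · exact absurd haZ (Set.disjoint_left.1 hsepp.2.1 h')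
                    · exact h'
                  exact hsept.2.2.2.2 b hbW a haCZ hadj.symm
                · rcases hbY with h' | h'
                  · exact sep_no_adj hsepp h' haZ hadj.symm
                  · exact hbW (Or.inl h')
            rcases hT.2.2.1 (Yp, Sp, Zp) hp (C ∩ Zp, St, Wt) hrT
              (Zp \ C, Sp, Yp ∪ C ∩ Zp) h with ⟨x, hx⟩ | ⟨a, b, hadj, h1, h2, h3⟩
            · obtain ⟨⟨hxZ, hxW⟩, hxY⟩ := hx
              rcases hxY with h' | h'
              · exact Set.disjoint_left.1 hsepp.2.1 h' hxZ
              · exact hxW (Or.inl h')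
            · rcases h1 with haZ | hbZ
              · exact main a b hadj haZ h2 h3
              · exact main b a hadj.symm hbZ (Or.symm h2) (Or.symm h3)
        have hCRempty : ∀ x, x ∈ C → x ∉ R := fun x hx => comp_subset_compl hx
        have e1' : (Yp ∪ C ∩ Zp) ∩ R = (Subtype.val '' Y' : Set V) := by
          rw [Set.union_inter_distrib_right]
          have : (C ∩ Zp) ∩ R = ∅ := by
            ext x
            simp only [Set.mem_inter_iff, Set.mem_empty_iff_false, iff_false]
            rintro ⟨⟨h1, _⟩, h3⟩
            exact hCRempty x h1 h3
          rw [this, Set.union_empty, e1]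
        have e3' : (Zp \ C) ∩ R = (Subtype.val '' Z' : Set V) := by
          rw [← e3]
          ext x
          constructor
          · rintro ⟨⟨h1, _⟩, h3⟩; exact ⟨h1, h3⟩
          · rintro ⟨h1, h3⟩; exact ⟨⟨h1, fun hC => hCRempty x hC h3⟩, h3⟩
        have hvC : v ∈ C := mem_comp_self hvR
        have hssub : Zp \ C ⊂ Zp := ⟨Set.diff_subset, fun hsub => (hsub hvZ).2 hvC⟩
        have hlt : (Zp \ C).ncard < Zp.ncard := Set.ncard_lt_ncard hssub (Set.toFinite _)
        exact ih (Yp ∪ C ∩ Zp, Sp, Zp \ C) hcT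
          (by have hn' : Zp.ncard ≤ n + 1 := hn; show (Zp \ C).ncard ≤ n; omega) e1' e2 e3'
      · -- junk-free: the lift itself is in T
        push_neg at hjunk
        have hLsep := lift_sep (G := G) (R := R) hq
        have hordL : (Subtype.val '' S' : Set V).ncard < 4 := by
          rw [← e2]
          exact lt_of_le_of_lt (Set.ncard_le_ncard Set.inter_subset_left (Set.toFinite _)) hordp
        rcases hT.2.1 _ _ _ hLsep hordL with h | h
        · exact h
        · exfalso
          have hZpY : ∀ x, x ∈ Zp → x ∈ liftY G R Y' Z' → False := by
            intro x hxZ hxY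
            rcases hxY with h' | h'
            · have hxR : x ∈ R := val_image_subset _ h'
              have hxZv : x ∈ (Subtype.val '' Z' : Set V) := by
                rw [← e3]; exact ⟨hxZ, hxR⟩
              exact Set.disjoint_left.1 (disjoint_val_image hq.2.1) h' hxZv
            · exact h'.2 (hjunk x hxZ h'.1)
          have main : ∀ a b : V, G.Adj a b → a ∈ Zp → a ∈ liftY G R Y' Z' ∨
              b ∈ liftY G R Y' Z' → False := by
            intro a b hadj haZ hY
            rcases hY with haY | hbY
            · exact hZpY a haZ haY
            · rcases hbY with h' | h'
              · -- b ∈ val '' Y'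
                by_cases haR : a ∈ R
                · have haZv : a ∈ (Subtype.val '' Z' : Set V) := by
                    rw [← e3]; exact ⟨haZ, haR⟩
                  exact no_cross_adj hq h' haZv hadj.symm
                · obtain ⟨c, hcN, hcZv⟩ := hjunk a haZ haR
                  have hbN : b ∈ Nbhd G (comp G R a) := by
                    refine ⟨fun hmem => (comp_subset_compl hmem) (val_image_subset _ h'),
                      a, mem_comp_self haR, hadj⟩
                  exact no_cross_comp hq (isCompOutside_comp haR) h' hcZv hbN hcN
              · -- b in a junk component
                by_cases haR : a ∈ R
                · have haZv : a ∈ (Subtype.val '' Z' : Set V) := by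
                    rw [← e3]; exact ⟨haZ, haR⟩
                  refine h'.2 ⟨a, ?_, haZv⟩
                  exact ⟨fun hmem => (comp_subset_compl hmem) haR, b, mem_comp_self h'.1,
                    hadj.symm⟩
                · obtain ⟨hb1, hb2⟩ := h'
                  have hba : b ∈ comp G R a := comp_adj_closed (mem_comp_self haR) hadj hb1
                  have hcc : comp G R b = comp G R a := comp_eq_of_mem hba
                  rw [hcc] at hb2
                  exact hb2 (hjunk a haZ haR)
          rcases hT.2.2.1 (Yp, Sp, Zp) hp
            (liftZ G R Z', (Subtype.val '' S' : Set V), liftY G R Y' Z') h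
            (liftZ G R Z', (Subtype.val '' S' : Set V), liftY G R Y' Z') h with
            ⟨x, hx⟩ | ⟨a, b, hadj, h1, h2, _⟩
          · exact hZpY x hx.1.1 hx.2
          · rcases h1 with haZ | hbZ
            · exact main a b hadj haZ h2
            · exact main b a hadj.symm hbZ (Or.symm h2)

end Lift

end Stmt8
/-- a tangle of order 4 whose truncation to order 3 is 𝒯³(R) for a
triconnected region R induces a tangle of order 4 of the torso G⟦R⟧. -/
theorem statement8 {V : Type*} [Fintype V] (G : SimpleGraph V) (R : Set V)
    (hR : TriconnectedRegion G R)
    (T : Set (Set V × Set V × Set V)) (hT : IsTangle G 4 T)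
    (htrunc : {p : Set V × Set V × Set V | p ∈ T ∧ p.2.1.ncard < 3} =
      {p : Set V × Set V × Set V |
        IsSeparation G p.1 p.2.1 p.2.2 ∧ p.2.1.ncard < 3 ∧ R ⊆ p.2.1 ∪ p.2.2}) :
    IsTangle (torso G R) 4
      {q : Set ↥R × Set ↥R × Set ↥R |
        IsSeparation (torso G R) q.1 q.2.1 q.2.2 ∧ q.2.1.ncard < 4 ∧
        ∃ p ∈ T, q.1 = {w : ↥R | (w : V) ∈ p.1} ∧
          q.2.1 = {w : ↥R | (w : V) ∈ p.2.1} ∧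
          q.2.2 = {w : ↥R | (w : V) ∈ p.2.2}} := by
  classical
  refine ⟨?_, ?_, ?_, ?_⟩
  · -- (T0) every member is a separation of order < 4
    intro q hq
    exact ⟨hq.1, hq.2.1⟩
  · -- (T1) orientation of every separation of order < 4
    intro Y' S' Z' hsep h4
    have hordL : (Subtype.val '' S' : Set V).ncard < 4 := by
      rw [Set.ncard_image_of_injective _ Subtype.val_injective]
      exact h4
    rcases hT.2.1 (Stmt8.liftY G R Y' Z') (Subtype.val '' S') (Stmt8.liftZ G R Z')
      (Stmt8.lift_sep hsep) hordL with h | h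
    · left
      exact ⟨hsep, h4, (Stmt8.liftY G R Y' Z', Subtype.val '' S', Stmt8.liftZ G R Z'), h,
        Stmt8.proj_liftY.symm, Stmt8.proj_val.symm, Stmt8.proj_liftZ.symm⟩
    · right
      exact ⟨Stmt8.sep_rev hsep, h4,
        (Stmt8.liftZ G R Z', Subtype.val '' S', Stmt8.liftY G R Y' Z'), h,
        Stmt8.proj_liftZ.symm, Stmt8.proj_val.symm, Stmt8.proj_liftY.symm⟩
  · -- (T2)
    rintro q₁ ⟨hsep₁, h4₁, p₁, hp₁, f11, f12, f13⟩ q₂ ⟨hsep₂, h4₂, p₂, hp₂, f21, f22, f23⟩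
      q₃ ⟨hsep₃, h4₃, p₃, hp₃, f31, f32, f33⟩
    have e11 : p₁.1 ∩ R = (Subtype.val '' q₁.1 : Set V) := by rw [f11, Stmt8.val_image_setOf]
    have e12 : p₁.2.1 ∩ R = (Subtype.val '' q₁.2.1 : Set V) := by
      rw [f12, Stmt8.val_image_setOf]
    have e13 : p₁.2.2 ∩ R = (Subtype.val '' q₁.2.2 : Set V) := by
      rw [f13, Stmt8.val_image_setOf]
    have e21 : p₂.1 ∩ R = (Subtype.val '' q₂.1 : Set V) := by rw [f21, Stmt8.val_image_setOf]
    have e22 : p₂.2.1 ∩ R = (Subtype.val '' q₂.2.1 : Set V) := by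
      rw [f22, Stmt8.val_image_setOf]
    have e23 : p₂.2.2 ∩ R = (Subtype.val '' q₂.2.2 : Set V) := by
      rw [f23, Stmt8.val_image_setOf]
    have e31 : p₃.1 ∩ R = (Subtype.val '' q₃.1 : Set V) := by rw [f31, Stmt8.val_image_setOf]
    have e32 : p₃.2.1 ∩ R = (Subtype.val '' q₃.2.1 : Set V) := by
      rw [f32, Stmt8.val_image_setOf]
    have e33 : p₃.2.2 ∩ R = (Subtype.val '' q₃.2.2 : Set V) := by
      rw [f33, Stmt8.val_image_setOf]
    have hL₁ : (Stmt8.liftY G R q₁.1 q₁.2.2, (Subtype.val '' q₁.2.1 : Set V),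
        Stmt8.liftZ G R q₁.2.2) ∈ T :=
      Stmt8.lift_mem_T hR hT htrunc hsep₁ p₁ hp₁ e11 e12 e13
    have hL₂ : (Stmt8.liftY G R q₂.1 q₂.2.2, (Subtype.val '' q₂.2.1 : Set V),
        Stmt8.liftZ G R q₂.2.2) ∈ T :=
      Stmt8.lift_mem_T hR hT htrunc hsep₂ p₂ hp₂ e21 e22 e23
    have hL₃ : (Stmt8.liftY G R q₃.1 q₃.2.2, (Subtype.val '' q₃.2.1 : Set V),
        Stmt8.liftZ G R q₃.2.2) ∈ T :=
      Stmt8.lift_mem_T hR hT htrunc hsep₃ p₃ hp₃ e31 e32 e33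
    -- the key finite analysis on the (≤ 2)-element neighbourhood of a component
    have key : ∀ C : Set V, IsCompOutside G R C →
        ∀ b₁ ∈ Nbhd G C ∩ (Subtype.val '' q₁.2.2 : Set V),
        ∀ b₂ ∈ Nbhd G C ∩ (Subtype.val '' q₂.2.2 : Set V),
        ∀ b₃ ∈ Nbhd G C ∩ (Subtype.val '' q₃.2.2 : Set V),
        (q₁.2.2 ∩ q₂.2.2 ∩ q₃.2.2 : Set ↥R).Nonempty ∨
          ∃ u v : ↥R, (torso G R).Adj u v ∧ (u ∈ q₁.2.2 ∨ v ∈ q₁.2.2) ∧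
            (u ∈ q₂.2.2 ∨ v ∈ q₂.2.2) ∧ (u ∈ q₃.2.2 ∨ v ∈ q₃.2.2) := by
      intro C hC b₁ hb₁ b₂ hb₂ b₃ hb₃
      have hB2 : (Nbhd G C).ncard ≤ 2 := Stmt8.nbhd_ncard_le_two hR hC
      have hb₁R : b₁ ∈ R := Stmt8.nbhd_subset_R hC hb₁.1
      have hb₂R : b₂ ∈ R := Stmt8.nbhd_subset_R hC hb₂.1
      have hb₃R : b₃ ∈ R := Stmt8.nbhd_subset_R hC hb₃.1
      have m₁ : (⟨b₁, hb₁R⟩ : ↥R) ∈ q₁.2.2 := (Stmt8.mem_val_image hb₁R).1 hb₁.2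
      have m₂ : (⟨b₂, hb₂R⟩ : ↥R) ∈ q₂.2.2 := (Stmt8.mem_val_image hb₂R).1 hb₂.2
      have m₃ : (⟨b₃, hb₃R⟩ : ↥R) ∈ q₃.2.2 := (Stmt8.mem_val_image hb₃R).1 hb₃.2
      have sub : ∀ a b : V, a = b → ∀ (ha : a ∈ R) (hb : b ∈ R),
          (⟨a, ha⟩ : ↥R) = ⟨b, hb⟩ := by
        intro a b hab ha hb
        exact Subtype.ext hab
      by_cases h12 : b₁ = b₂
      · by_cases h13 : b₁ = b₃
        · left
          refine ⟨⟨b₁, hb₁R⟩, ⟨m₁, ?_⟩, ?_⟩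
          · rw [sub b₁ b₂ h12 hb₁R hb₂R]; exact m₂
          · rw [sub b₁ b₃ h13 hb₁R hb₃R]; exact m₃
        · right
          refine ⟨⟨b₁, hb₁R⟩, ⟨b₃, hb₃R⟩,
            Stmt8.torso_adj_of_nbhd hC hb₁R hb₃R hb₁.1 hb₃.1 h13, Or.inl m₁, ?_, Or.inr m₃⟩
          left; rw [sub b₁ b₂ h12 hb₁R hb₂R]; exact m₂
      · by_cases h13 : b₁ = b₃
        · right
          refine ⟨⟨b₁, hb₁R⟩, ⟨b₂, hb₂R⟩,
            Stmt8.torso_adj_of_nbhd hC hb₁R hb₂R hb₁.1 hb₂.1 h12, Or.inl m₁, Or.inr m₂, ?_⟩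
          left; rw [sub b₁ b₃ h13 hb₁R hb₃R]; exact m₃
        · by_cases h23 : b₂ = b₃
          · right
            refine ⟨⟨b₁, hb₁R⟩, ⟨b₂, hb₂R⟩,
              Stmt8.torso_adj_of_nbhd hC hb₁R hb₂R hb₁.1 hb₂.1 h12, Or.inl m₁, Or.inr m₂, ?_⟩
            right; rw [sub b₂ b₃ h23 hb₂R hb₃R]; exact m₃
          · exfalso
            have htriple : ({b₁, b₂, b₃} : Set V).ncard = 3 := by
              rw [Set.ncard_insert_of_notMem (by simp [h12, h13]), Set.ncard_pair h23]
            have hle : ({b₁, b₂, b₃} : Set V).ncard ≤ (Nbhd G C).ncard := by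
              apply Set.ncard_le_ncard _ (Set.toFinite _)
              intro t ht
              rcases ht with rfl | rfl | rfl
              · exact hb₁.1
              · exact hb₂.1
              · exact hb₃.1
            omega
    rcases hT.2.2.1 _ hL₁ _ hL₂ _ hL₃ with ⟨x, hx⟩ | ⟨u, v, hadj, h1, h2, h3⟩
    · obtain ⟨⟨hx1, hx2⟩, hx3⟩ := hx
      by_cases hxR : x ∈ R
      · left
        have g : ∀ (Zi' : Set ↥R), x ∈ Stmt8.liftZ G R Zi' → (⟨x, hxR⟩ : ↥R) ∈ Zi' := by
          intro Zi' h
          rcases h with h | h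
          · exact (Stmt8.mem_val_image hxR).1 h
          · exact absurd hxR h.1
        exact ⟨⟨x, hxR⟩, ⟨g _ hx1, g _ hx2⟩, g _ hx3⟩
      · have g : ∀ (Zi' : Set ↥R), x ∈ Stmt8.liftZ G R Zi' →
            ∃ b, b ∈ Nbhd G (Stmt8.comp G R x) ∩ (Subtype.val '' Zi' : Set V) := by
          intro Zi' h
          rcases h with h | h
          · exact absurd (Stmt8.val_image_subset _ h) hxR
          · exact h.2
        obtain ⟨b₁, hb₁⟩ := g _ hx1
        obtain ⟨b₂, hb₂⟩ := g _ hx2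
        obtain ⟨b₃, hb₃⟩ := g _ hx3
        exact key (Stmt8.comp G R x) (Stmt8.isCompOutside_comp hxR) b₁ hb₁ b₂ hb₂ b₃ hb₃
    · by_cases huR : u ∈ R
      · by_cases hvR : v ∈ R
        · right
          have g : ∀ (Zi' : Set ↥R), (u ∈ Stmt8.liftZ G R Zi' ∨ v ∈ Stmt8.liftZ G R Zi') →
              ((⟨u, huR⟩ : ↥R) ∈ Zi' ∨ (⟨v, hvR⟩ : ↥R) ∈ Zi') := by
            intro Zi' h
            rcases h with (h | h) | (h | h)
            · exact Or.inl ((Stmt8.mem_val_image huR).1 h)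
            · exact absurd huR h.1
            · exact Or.inr ((Stmt8.mem_val_image hvR).1 h)
            · exact absurd hvR h.1
          exact ⟨⟨u, huR⟩, ⟨v, hvR⟩, Stmt8.torso_adj_of_adj huR hvR hadj,
            g _ h1, g _ h2, g _ h3⟩
        · -- u ∈ R, v ∉ R
          have hvC : v ∈ Stmt8.comp G R v := Stmt8.mem_comp_self hvR
          have g : ∀ (Zi' : Set ↥R), (u ∈ Stmt8.liftZ G R Zi' ∨ v ∈ Stmt8.liftZ G R Zi') →
              ∃ b, b ∈ Nbhd G (Stmt8.comp G R v) ∩ (Subtype.val '' Zi' : Set V) := by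
            intro Zi' h
            rcases h with (h | h) | (h | h)
            · refine ⟨u, ⟨fun hm => (Stmt8.comp_subset_compl hm) huR, v, hvC, hadj.symm⟩, h⟩
            · exact absurd huR h.1
            · exact absurd (Stmt8.val_image_subset _ h) hvR
            · exact h.2
          obtain ⟨b₁, hb₁⟩ := g _ h1
          obtain ⟨b₂, hb₂⟩ := g _ h2
          obtain ⟨b₃, hb₃⟩ := g _ h3
          exact key (Stmt8.comp G R v) (Stmt8.isCompOutside_comp hvR) b₁ hb₁ b₂ hb₂ b₃ hb₃
      · -- u ∉ R
        have huC : u ∈ Stmt8.comp G R u := Stmt8.mem_comp_self huR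
        have g : ∀ (Zi' : Set ↥R), (u ∈ Stmt8.liftZ G R Zi' ∨ v ∈ Stmt8.liftZ G R Zi') →
            ∃ b, b ∈ Nbhd G (Stmt8.comp G R u) ∩ (Subtype.val '' Zi' : Set V) := by
          intro Zi' h
          rcases h with (h | h) | (h | h)
          · exact absurd (Stmt8.val_image_subset _ h) huR
          · exact h.2
          · refine ⟨v, ⟨fun hm => (Stmt8.comp_subset_compl hm) (Stmt8.val_image_subset _ h),
              u, huC, hadj⟩, h⟩
          · obtain ⟨hv1, hv2⟩ := h
            have hvu : v ∈ Stmt8.comp G R u := Stmt8.comp_adj_closed huC hadj hv1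
            have hcc : Stmt8.comp G R v = Stmt8.comp G R u := Stmt8.comp_eq_of_mem hvu
            rw [hcc] at hv2
            exact hv2
        obtain ⟨b₁, hb₁⟩ := g _ h1
        obtain ⟨b₂, hb₂⟩ := g _ h2
        obtain ⟨b₃, hb₃⟩ := g _ h3
        exact key (Stmt8.comp G R u) (Stmt8.isCompOutside_comp huR) b₁ hb₁ b₂ hb₂ b₃ hb₃
  · -- (T3)
    rintro q ⟨hsep, h4, p, hp, f1, f2, f3⟩
    obtain ⟨x, hx1, hx2⟩ := Stmt8.lemK hR hT htrunc p hp
    refine ⟨⟨x, hx2⟩, ?_⟩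
    rw [f3]
    exact hx1
end

section
/- Let G be a quasi-4-connected finite simple graph with |V(G)| ≥ 8. Then 𝒯 := {(Y,S,Z) : (Y,S,Z) is a separation of G of order < 4 with |Y| < |Z|} is a G-tangle of order 4. -/
variable {V : Type*} {W : Type*}

section Aux

lemma cover_decomp {α : Type*} (A₁ A₂ A₃ : Set α) : A₁ ∪ A₂ ∪ A₃ ⊆
    (A₁ \ (A₂ ∪ A₃)) ∪ (A₂ \ (A₁ ∪ A₃)) ∪ (A₃ \ (A₁ ∪ A₂))
      ∪ ((A₁ ∩ A₂) ∪ ((A₁ ∪ A₂) ∩ A₃)) := by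
  intro v hv
  simp only [Set.mem_union, Set.mem_diff, Set.mem_inter_iff] at hv ⊢
  tauto

lemma sep_symm' {V : Type*} {G : SimpleGraph V} {Y S Z : Set V}
    (h : IsSeparation G Y S Z) : IsSeparation G Z S Y := by
  obtain ⟨h1, h2, h3, h4, h5⟩ := h
  refine ⟨h3.symm, h2.symm, h1.symm, ?_, fun z hz y hy hadj => h5 y hy z hz hadj.symm⟩
  rw [← h4]; ext v; simp only [Set.mem_union]; tauto

lemma sep_Z_eq_compl {V : Type*} {G : SimpleGraph V} {Y S Z : Set V}
    (h : IsSeparation G Y S Z) : Z = (Y ∪ S)ᶜ := by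
  obtain ⟨h1, h2, h3, h4, _⟩ := h
  ext v
  constructor
  · intro hv
    simp only [Set.mem_compl_iff, Set.mem_union]
    push_neg
    exact ⟨fun hY => h2.ne_of_mem hY hv rfl, fun hS => h3.ne_of_mem hS hv rfl⟩
  · intro hv
    have := h4.symm ▸ Set.mem_univ v
    simp only [Set.mem_union] at this hv ⊢
    simp only [Set.mem_compl_iff, Set.mem_union] at hv
    tauto

/-- In a quasi-4-connected graph, a member of the tangle has small side of size ≤ 1. -/
lemma small_Y {V : Type*} [Fintype V] {G : SimpleGraph V} (hq : Quasi4Connected G)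
    {Y S Z : Set V} (hsep : IsSeparation G Y S Z) (hS : S.ncard < 4)
    (hYZ : Y.ncard < Z.ncard) : Y.ncard ≤ 1 := by
  rcases Set.eq_empty_or_nonempty Y with hY | hY
  · simp [hY]
  have hZ : Z.Nonempty := by
    rw [← Set.ncard_pos]
    omega
  have h3 : 3 ≤ S.ncard := hq.1.2 Y S Z hsep hY hZ
  have hS3 : S.ncard = 3 := by omega
  rcases hq.2 Y S Z hsep hS3 with h | h
  · exact h
  · omega

/-- Key counting lemma: a nonempty piece attached only to a ≤4-set has size ≤ 1. -/
lemma piece_le_one {V : Type*} [Fintype V] {G : SimpleGraph V}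
    (hq : Quasi4Connected G) (hcard : 8 ≤ Nat.card V)
    {A P : Set V} (hA : A.ncard ≤ 4) (hPA : P ⊆ A)
    (hedge : ∀ y ∈ P, ∀ z ∈ Aᶜ, ¬ G.Adj y z) : P.ncard ≤ 1 := by
  rcases Set.eq_empty_or_nonempty P with hP | hP
  · simp [hP]
  have hAc : (Aᶜ : Set V).Nonempty := by
    rw [← Set.ncard_pos]
    have := Set.ncard_add_ncard_compl A
    omega
  have hsep : IsSeparation G P (A \ P) Aᶜ := by
    refine ⟨Set.disjoint_sdiff_right.symm.symm, ?_, ?_, ?_, hedge⟩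
    · exact Set.disjoint_compl_right_iff_subset.mpr hPA
    · exact Set.disjoint_compl_right_iff_subset.mpr Set.diff_subset
    · rw [Set.union_diff_cancel hPA, Set.union_compl_self]
  have h3 : 3 ≤ (A \ P).ncard := hq.1.2 P (A \ P) Aᶜ hsep hP hAc
  have := Set.ncard_diff_add_ncard_of_subset hPA
  omega

/-- for a quasi-4-connected graph with at least 8 vertices, the
separations of order < 4 with |Y| < |Z| form a tangle of order 4. -/
theorem statement9 {V : Type*} [Fintype V] (G : SimpleGraph V)
    (hq : Quasi4Connected G) (hcard : 8 ≤ Nat.card V) :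
    IsTangle G 4 {p : Set V × Set V × Set V |
      IsSeparation G p.1 p.2.1 p.2.2 ∧ p.2.1.ncard < 4 ∧
        p.1.ncard < p.2.2.ncard} := by
  refine ⟨?_, ?_, ?_, ?_⟩
  · -- every member is a separation of order < 4
    rintro p ⟨h1, h2, _⟩
    exact ⟨h1, h2⟩
  · -- (T1)
    intro Y S Z hsep hS
    rcases lt_trichotomy Y.ncard Z.ncard with h | h | h
    · exact Or.inl ⟨hsep, hS, h⟩
    · -- |Y| = |Z| is impossible
      exfalso
      have hn : Y.ncard + S.ncard + Z.ncard = Nat.card V := by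
        rw [← Set.ncard_univ V, ← hsep.2.2.2.1,
          Set.ncard_union_eq (by
            exact Set.disjoint_union_left.mpr ⟨hsep.2.1, hsep.2.2.1⟩),
          Set.ncard_union_eq hsep.1]
      rcases Set.eq_empty_or_nonempty Y with hY | hY
      · have hZ : Z = ∅ := by
          rw [← Set.ncard_eq_zero]
          rw [hY] at h
          simpa using h.symm
        rw [hY, hZ] at hn
        simp only [Set.ncard_empty] at hn
        omega
      · have hZ : Z.Nonempty := by
          rw [← Set.ncard_pos] at hY ⊢
          omega
        have h3 : 3 ≤ S.ncard := hq.1.2 Y S Z hsep hY hZ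
        have hS3 : S.ncard = 3 := by omega
        have hY1 : Y.ncard ≤ 1 := by
          rcases hq.2 Y S Z hsep hS3 with h' | h'
          · exact h'
          · omega
        rw [← Set.ncard_pos] at hY hZ
        omega
    · exact Or.inr ⟨sep_symm' hsep, hS, h⟩
  · -- (T2)
    rintro p₁ ⟨hs₁, hS₁, hYZ₁⟩ p₂ ⟨hs₂, hS₂, hYZ₂⟩ p₃ ⟨hs₃, hS₃, hYZ₃⟩
    by_contra hcon
    push_neg at hcon
    obtain ⟨hint, hedge⟩ := hcon
    set A₁ : Set V := p₁.1 ∪ p₁.2.1 with hA₁def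
    set A₂ : Set V := p₂.1 ∪ p₂.2.1 with hA₂def
    set A₃ : Set V := p₃.1 ∪ p₃.2.1 with hA₃def
    have hZ₁ : p₁.2.2 = A₁ᶜ := sep_Z_eq_compl hs₁
    have hZ₂ : p₂.2.2 = A₂ᶜ := sep_Z_eq_compl hs₂
    have hZ₃ : p₃.2.2 = A₃ᶜ := sep_Z_eq_compl hs₃
    -- every edge lies within some Aᵢ
    have hE : ∀ u v : V, G.Adj u v →
        (u ∈ A₁ ∧ v ∈ A₁) ∨ (u ∈ A₂ ∧ v ∈ A₂) ∨ (u ∈ A₃ ∧ v ∈ A₃) := by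
      intro u v hadj
      by_cases h1 : u ∈ A₁ ∧ v ∈ A₁
      · exact Or.inl h1
      by_cases h2 : u ∈ A₂ ∧ v ∈ A₂
      · exact Or.inr (Or.inl h2)
      have hu1 : u ∈ p₁.2.2 ∨ v ∈ p₁.2.2 := by
        rw [hZ₁]; simp only [Set.mem_compl_iff]; tauto
      have hu2 : u ∈ p₂.2.2 ∨ v ∈ p₂.2.2 := by
        rw [hZ₂]; simp only [Set.mem_compl_iff]; tauto
      have h3 := hedge u v hadj hu1 hu2
      rw [hZ₃] at h3
      simp only [Set.mem_compl_iff, not_not] at h3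
      exact Or.inr (Or.inr h3)
    -- the Aᵢ cover V
    have hcover : A₁ ∪ A₂ ∪ A₃ = Set.univ := by
      rw [hZ₁, hZ₂, hZ₃] at hint
      rw [← Set.compl_empty_iff, Set.compl_union, Set.compl_union]
      exact hint
    -- each Aᵢ has size ≤ 4
    have hA₁ : A₁.ncard ≤ 4 := by
      have := small_Y hq hs₁ hS₁ hYZ₁
      calc A₁.ncard ≤ p₁.1.ncard + p₁.2.1.ncard := Set.ncard_union_le _ _
        _ ≤ 4 := by omega
    have hA₂ : A₂.ncard ≤ 4 := by
      have := small_Y hq hs₂ hS₂ hYZ₂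
      calc A₂.ncard ≤ p₂.1.ncard + p₂.2.1.ncard := Set.ncard_union_le _ _
        _ ≤ 4 := by omega
    have hA₃ : A₃.ncard ≤ 4 := by
      have := small_Y hq hs₃ hS₃ hYZ₃
      calc A₃.ncard ≤ p₃.1.ncard + p₃.2.1.ncard := Set.ncard_union_le _ _
        _ ≤ 4 := by omega
    -- the private pieces
    set P₁ : Set V := A₁ \ (A₂ ∪ A₃) with hP₁def
    set P₂ : Set V := A₂ \ (A₁ ∪ A₃) with hP₂def
    set P₃ : Set V := A₃ \ (A₁ ∪ A₂) with hP₃def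
    have hP₁ : P₁.ncard ≤ 1 := by
      refine piece_le_one hq hcard hA₁ Set.diff_subset ?_
      intro y hy z hz hadj
      rcases hE y z hadj with h | h | h
      · exact hz h.2
      · exact hy.2 (Or.inl h.1)
      · exact hy.2 (Or.inr h.1)
    have hP₂ : P₂.ncard ≤ 1 := by
      refine piece_le_one hq hcard hA₂ Set.diff_subset ?_
      intro y hy z hz hadj
      rcases hE y z hadj with h | h | h
      · exact hy.2 (Or.inl h.1)
      · exact hz h.2
      · exact hy.2 (Or.inr h.1)
    have hP₃ : P₃.ncard ≤ 1 := by
      refine piece_le_one hq hcard hA₃ Set.diff_subset ?_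
      intro y hy z hz hadj
      rcases hE y z hadj with h | h | h
      · exact hy.2 (Or.inl h.1)
      · exact hy.2 (Or.inr h.1)
      · exact hz h.2
    -- counting
    have e1 : (A₁ ∪ A₂).ncard + (A₁ ∩ A₂).ncard = A₁.ncard + A₂.ncard :=
      Set.ncard_union_add_ncard_inter A₁ A₂
    have e2 : ((A₁ ∪ A₂) ∪ A₃).ncard + ((A₁ ∪ A₂) ∩ A₃).ncard
        = (A₁ ∪ A₂).ncard + A₃.ncard := Set.ncard_union_add_ncard_inter _ A₃
    have euniv : ((A₁ ∪ A₂) ∪ A₃).ncard = Nat.card V := by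
      rw [hcover, Set.ncard_univ]
    have hODecomp : (Set.univ : Set V)
        ⊆ P₁ ∪ P₂ ∪ P₃ ∪ ((A₁ ∩ A₂) ∪ ((A₁ ∪ A₂) ∩ A₃)) := by
      rw [← hcover]
      exact cover_decomp A₁ A₂ A₃
    have hbound : Nat.card V ≤ P₁.ncard + P₂.ncard + P₃.ncard
        + ((A₁ ∩ A₂).ncard + ((A₁ ∪ A₂) ∩ A₃).ncard) := by
      calc Nat.card V = (Set.univ : Set V).ncard := (Set.ncard_univ V).symm
        _ ≤ (P₁ ∪ P₂ ∪ P₃ ∪ ((A₁ ∩ A₂) ∪ ((A₁ ∪ A₂) ∩ A₃))).ncard :=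
            Set.ncard_le_ncard hODecomp (Set.toFinite _)
        _ ≤ (P₁ ∪ P₂ ∪ P₃).ncard + ((A₁ ∩ A₂) ∪ ((A₁ ∪ A₂) ∩ A₃)).ncard :=
            Set.ncard_union_le _ _
        _ ≤ (P₁ ∪ P₂).ncard + P₃.ncard + ((A₁ ∩ A₂) ∪ ((A₁ ∪ A₂) ∩ A₃)).ncard :=
            by gcongr; exact Set.ncard_union_le _ _
        _ ≤ P₁.ncard + P₂.ncard + P₃.ncard + ((A₁ ∩ A₂).ncard
            + ((A₁ ∪ A₂) ∩ A₃).ncard) := by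
              gcongr
              · exact Set.ncard_union_le _ _
              · exact Set.ncard_union_le _ _
    omega
  · -- (T3)
    rintro p ⟨_, _, hYZ⟩
    rw [← Set.ncard_pos]
    omega
end Aux
end
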